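/- arXiv:2205.00527 — 6 statements merged into one kernel-verified Lean document; each statement's English description precedes it below -/
import Mathlib

section
/- For all nonnegative integers N and n, the number of partitions π with all parts ≤ N and O(π) = n equals the number of 2-color partitions (ρ, σ) of n (ρ red, σ green) such that the number of parts of ρ plus the largest part of σ is at most N. -/
/-- Sum of `f` over the entries of a list at even 0-based positions, i.e. over the
odd-indexed parts `λ1, λ3, λ5, …` of a partition `(λ1, λ2, λ3, …)`. -/
def sumAlt (f : ℕ → ℕ) : List ℕ → ℕ
  | [] => 0
  | [a] => f a
  | a :: _ :: l => f a + sumAlt f l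

/-- `O(π) = λ1 + λ3 + λ5 + ⋯`, the sum of the odd-indexed parts. -/
def Osum (l : List ℕ) : ℕ := sumAlt id l

/-- `E(π) = λ2 + λ4 + λ6 + ⋯`, the sum of the even-indexed parts. -/
def Esum (l : List ℕ) : ℕ := sumAlt id l.tail

/-- `γ(π) = λ1 − λ2 + λ3 − λ4 + ⋯ = O(π) − E(π)`, the alternating sum of the parts.
For a weakly decreasing list we have `Osum l ≥ Esum l`, so natural subtraction is exact. -/
def gammaSum (l : List ℕ) : ℕ := Osum l - Esum l

/-- `⌈O⌉(π) = ∑ ⌈λ_{2i−1}/2⌉`. -/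
def ceilO (l : List ℕ) : ℕ := sumAlt (fun a => (a + 1) / 2) l

/-- `⌊O⌋(π) = ∑ ⌊λ_{2i−1}/2⌋`. -/
def floorO (l : List ℕ) : ℕ := sumAlt (fun a => a / 2) l

/-- `⌈E⌉(π) = ∑ ⌈λ_{2i}/2⌉`. -/
def ceilE (l : List ℕ) : ℕ := sumAlt (fun a => (a + 1) / 2) l.tail

/-- `⌊E⌋(π) = ∑ ⌊λ_{2i}/2⌋`. -/
def floorE (l : List ℕ) : ℕ := sumAlt (fun a => a / 2) l.tail

/-- A partition: a weakly decreasing finite list of positive integers. -/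
def IsPartition (l : List ℕ) : Prop := l.Pairwise (· ≥ ·) ∧ ∀ x ∈ l, 0 < x

/-- A partition into distinct parts: a strictly decreasing finite list of positive integers. -/
def IsDistinctPartition (l : List ℕ) : Prop := l.Pairwise (· > ·) ∧ ∀ x ∈ l, 0 < x

/-- The Gaussian binomial coefficient `[n choose k]_q` as a polynomial in `q`
(defined by the q-Pascal recurrence; it equals `(q;q)_n / ((q;q)_k (q;q)_{n−k})`). -/
noncomputable def qbinom : ℕ → ℕ → Polynomial ℤ
  | _, 0 => 1
  | 0, _ + 1 => 0
  | n + 1, k + 1 => qbinom n k + Polynomial.X ^ (k + 1) * qbinom n (k + 1)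

namespace AP

lemma Osum_cons (a : ℕ) (t : List ℕ) : Osum (a :: t) = a + Esum t := by
  cases t <;> simp [Osum, Esum, sumAlt]

lemma Esum_cons (a : ℕ) (t : List ℕ) : Esum (a :: t) = Osum t := rfl

/-- difference function of a list -/
def toD (l : List ℕ) (j : ℕ) : ℕ := l.getD j 0 - l.getD (j+1) 0

lemma getD_zero_headI (l : List ℕ) : l.getD 0 0 = l.headI := by cases l <;> rfl

lemma toD_succ (a : ℕ) (t : List ℕ) (j : ℕ) : toD (a :: t) (j+1) = toD t j := rfl

lemma toD_zero (a : ℕ) (t : List ℕ) : toD (a :: t) 0 = a - t.headI := by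
  show a - t.getD 0 0 = a - t.headI
  rw [getD_zero_headI]

lemma toD_nil (j : ℕ) : toD [] j = 0 := rfl

lemma toD_eq_zero {l : List ℕ} {j : ℕ} (h : l.length ≤ j) : toD l j = 0 := by
  unfold toD
  rw [List.getD_eq_default _ _ h, List.getD_eq_default _ _ (le_trans h (Nat.le_succ j))]

lemma mem_le_headI {l : List ℕ} (hs : l.Pairwise (· ≥ ·)) {x : ℕ} (hx : x ∈ l) :
    x ≤ l.headI := by
  cases l with
  | nil => simp at hx
  | cons a t =>
    rcases List.mem_cons.1 hx with rfl | hx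
    · rfl
    · exact (List.pairwise_cons.1 hs).1 x hx

lemma headI_le_of_sorted {a : ℕ} {t : List ℕ} (hs : (a :: t).Pairwise (· ≥ ·)) :
    t.headI ≤ a := by
  cases t with
  | nil => exact Nat.zero_le a
  | cons b u => exact (List.pairwise_cons.1 hs).1 b (by simp)

lemma sum_toD_cons (w : ℕ → ℕ) (a : ℕ) (t : List ℕ) (B : ℕ) :
    ∑ j ∈ Finset.range (B+1), w j * toD (a :: t) j
      = w 0 * (a - t.headI) + ∑ j ∈ Finset.range B, w (j+1) * toD t j := by
  rw [Finset.sum_range_succ']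
  simp [toD_succ, toD_zero, add_comm]

lemma sum_toD_one {l : List ℕ} (hs : l.Pairwise (· ≥ ·)) :
    ∀ {B : ℕ}, l.length ≤ B → ∑ j ∈ Finset.range B, toD l j = l.headI := by
  induction l with
  | nil => intro B _; simp [toD_nil]
  | cons a t ih =>
    intro B hB
    cases B with
    | zero => simp at hB
    | succ B =>
      have h1 : ∑ j ∈ Finset.range (B+1), 1 * toD (a :: t) j
          = 1 * (a - t.headI) + ∑ j ∈ Finset.range B, 1 * toD t j :=
        sum_toD_cons (fun _ => 1) a t B
      simp only [one_mul] at h1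
      rw [h1, ih (List.pairwise_cons.1 hs).2 (by simpa using hB)]
      have := headI_le_of_sorted hs
      rw [List.headI_cons]
      omega

lemma sum_toD_linear {l : List ℕ} (hs : l.Pairwise (· ≥ ·)) :
    ∀ {B : ℕ}, l.length ≤ B → ∑ j ∈ Finset.range B, (j+1) * toD l j = l.sum := by
  induction l with
  | nil => intro B _; simp [toD_nil]
  | cons a t ih =>
    intro B hB
    cases B with
    | zero => simp at hB
    | succ B =>
      rw [sum_toD_cons (fun j => j + 1) a t B]
      have ht : t.Pairwise (· ≥ ·) := (List.pairwise_cons.1 hs).2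
      have hlen : t.length ≤ B := by simpa using hB
      have : ∑ j ∈ Finset.range B, (j+1+1) * toD t j
          = (∑ j ∈ Finset.range B, (j+1) * toD t j) + ∑ j ∈ Finset.range B, toD t j := by
        rw [← Finset.sum_add_distrib]
        exact Finset.sum_congr rfl (fun j _ => by ring)
      rw [this, ih ht hlen, sum_toD_one ht hlen]
      have := headI_le_of_sorted hs
      simp [List.sum_cons]
      omega

lemma sum_toD_OE {l : List ℕ} (hs : l.Pairwise (· ≥ ·)) :
    ∀ {B : ℕ}, l.length ≤ B →
      (∑ j ∈ Finset.range B, (j/2+1) * toD l j = Osum l) ∧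
      (∑ j ∈ Finset.range B, ((j+1)/2) * toD l j = Esum l) := by
  induction l with
  | nil => intro B _; simp [toD_nil, Osum, Esum, sumAlt]
  | cons a t ih =>
    intro B hB
    cases B with
    | zero => simp at hB
    | succ B =>
      have ht : t.Pairwise (· ≥ ·) := (List.pairwise_cons.1 hs).2
      have hlen : t.length ≤ B := by simpa using hB
      have hh := headI_le_of_sorted hs
      obtain ⟨ihO, ihE⟩ := ih ht hlen
      constructor
      · rw [sum_toD_cons (fun j => j/2+1) a t B]
        have : ∑ j ∈ Finset.range B, ((j+1)/2+1) * toD t j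
            = (∑ j ∈ Finset.range B, ((j+1)/2) * toD t j) + ∑ j ∈ Finset.range B, toD t j := by
          rw [← Finset.sum_add_distrib]
          exact Finset.sum_congr rfl (fun j _ => by ring)
        rw [this, ihE, sum_toD_one ht hlen, Osum_cons]
        simp
        omega
      · rw [sum_toD_cons (fun j => (j+1)/2) a t B]
        have : ∑ j ∈ Finset.range B, ((j+1+1)/2) * toD t j
            = ∑ j ∈ Finset.range B, (j/2+1) * toD t j := by
          refine Finset.sum_congr rfl (fun j _ => ?_)
          congr 1
          omega
        rw [this, ihO, Esum_cons]
        simp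



/-- reconstruct a partition list from its difference function, using bound `L` -/
def fromD : ℕ → (ℕ → ℕ) → List ℕ
  | 0, _ => []
  | (L+1), d =>
    if d 0 + (fromD L (fun k => d (k+1))).headI = 0 then []
    else (d 0 + (fromD L (fun k => d (k+1))).headI) :: fromD L (fun k => d (k+1))

lemma fromD_sorted : ∀ (L : ℕ) (d : ℕ → ℕ), (fromD L d).Pairwise (· ≥ ·)
  | 0, _ => List.Pairwise.nil
  | (L+1), d => by
    rw [fromD]
    split
    · exact List.Pairwise.nil
    · rw [List.pairwise_cons]
      refine ⟨fun b hb => ?_, fromD_sorted L _⟩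
      exact le_trans (mem_le_headI (fromD_sorted L _) hb) (Nat.le_add_left _ _)

lemma fromD_pos : ∀ (L : ℕ) (d : ℕ → ℕ), ∀ x ∈ fromD L d, 0 < x
  | 0, _ => by simp [fromD]
  | (L+1), d => by
    rw [fromD]
    split
    · simp
    · intro x hx
      rcases List.mem_cons.1 hx with rfl | hx
      · omega
      · exact fromD_pos L _ x hx

lemma fromD_length : ∀ (L : ℕ) (d : ℕ → ℕ), (fromD L d).length ≤ L
  | 0, _ => by simp [fromD]
  | (L+1), d => by
    rw [fromD]
    split
    · simp
    · simpa using fromD_length L _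

lemma fromD_getD : ∀ (L : ℕ) (d : ℕ → ℕ) (j : ℕ),
    (fromD L d).getD j 0 = ∑ k ∈ Finset.range (L - j), d (j + k)
  | 0, d, j => by simp [fromD]
  | (L+1), d, j => by
    have ih0 := fromD_getD L (fun k => d (k+1)) 0
    rw [fromD]
    split
    · rename_i h0
      rw [getD_zero_headI] at ih0
      simp only [zero_add] at ih0
      have hd0 : d 0 = 0 := by omega
      have hsum : ∑ k ∈ Finset.range (L - 0), d (k+1) = 0 := by
        rw [← ih0]; omega
      have hall : ∀ k < L, d (k+1) = 0 := by
        intro k hk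
        have := (Finset.sum_eq_zero_iff.1 (by rw [Nat.sub_zero] at hsum; exact hsum)) k (Finset.mem_range.2 hk)
        exact this
      simp only [List.getD_nil]
      symm
      refine Finset.sum_eq_zero (fun k hk => ?_)
      have hk' := Finset.mem_range.1 hk
      rcases Nat.eq_zero_or_pos (j + k) with h | h
      · simp [Nat.add_eq_zero] at h
        rw [h.1, h.2]; exact hd0
      · have : j + k - 1 < L := by omega
        have := hall (j + k - 1) this
        have he : j + k - 1 + 1 = j + k := by omega
        rw [he] at this
        exact this
    · cases j with
      | zero =>
        rw [getD_zero_headI] at ih0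
        simp only [zero_add] at ih0
        show d 0 + (fromD L fun k => d (k + 1)).headI = _
        simp only [Nat.sub_zero, Nat.zero_add] at ih0 ⊢
        rw [ih0, Finset.sum_range_succ']
        omega
      | succ j =>
        show (fromD L fun k => d (k+1)).getD j 0 = _
        rw [fromD_getD L (fun k => d (k+1)) j, Nat.succ_sub_succ]
        refine Finset.sum_congr rfl (fun k _ => ?_)
        congr 1
        omega

lemma toD_fromD {L : ℕ} {d : ℕ → ℕ} (hd : ∀ k, L ≤ k → d k = 0) (j : ℕ) :
    toD (fromD L d) j = d j := by
  unfold toD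
  rw [fromD_getD, fromD_getD]
  rcases Nat.lt_or_ge j L with h | h
  · have h1 : L - j = (L - (j+1)) + 1 := by omega
    rw [h1, Finset.sum_range_succ']
    have : ∀ k, d (j + (k + 1)) = d (j + 1 + k) := fun k => by congr 1; omega
    simp only [this, Nat.add_zero]
    omega
  · have h1 : L - j = 0 := by omega
    have h2 : L - (j+1) = 0 := by omega
    rw [h1, h2]
    simp [hd j h]

lemma fromD_of_zero : ∀ (L : ℕ) {d : ℕ → ℕ}, (∀ k, d k = 0) → fromD L d = []
  | 0, _, _ => rfl
  | (L+1), d, h => by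
    rw [fromD, fromD_of_zero L (fun k => h (k+1))]
    simp [h 0]

lemma fromD_toD : ∀ {l : List ℕ}, l.Pairwise (· ≥ ·) → (∀ x ∈ l, 0 < x) →
    ∀ {L : ℕ}, l.length ≤ L → fromD L (toD l) = l := by
  intro l
  induction l with
  | nil => intro _ _ L _; exact fromD_of_zero L (fun k => rfl)
  | cons a t ih =>
    intro hs hp L hL
    cases L with
    | zero => simp at hL
    | succ L =>
      have hfun : (fun k => toD (a :: t) (k+1)) = toD t := funext (fun k => toD_succ a t k)
      have ht : fromD L (fun k => toD (a :: t) (k+1)) = t := by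
        rw [hfun]
        exact ih (List.pairwise_cons.1 hs).2 (fun x hx => hp x (List.mem_cons_of_mem a hx))
          (by simpa using hL)
      rw [fromD, ht, toD_zero]
      have h1 : t.headI ≤ a := headI_le_of_sorted hs
      have h2 : 0 < a := hp a (by simp)
      have h3 : a - t.headI + t.headI = a := by omega
      rw [h3]
      simp [Nat.pos_iff_ne_zero.1 h2]

lemma fromD_lt_length {L k : ℕ} {d : ℕ → ℕ} (h1 : k < L) (h2 : 0 < d k) :
    k < (fromD L d).length := by
  by_contra hc
  push_neg at hc
  have := fromD_getD L d k
  rw [List.getD_eq_default _ _ hc] at this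
  have hterm : d (k + 0) ≤ ∑ m ∈ Finset.range (L - k), d (k + m) :=
    Finset.single_le_sum (f := fun m => d (k + m)) (fun m _ => Nat.zero_le _)
      (Finset.mem_range.2 (by omega))
  simp only [Nat.add_zero] at hterm
  omega

lemma toD_last {l : List ℕ} (hne : l ≠ []) (hp : ∀ x ∈ l, 0 < x) :
    0 < toD l (l.length - 1) := by
  have hlen : 0 < l.length := List.length_pos_iff.2 hne
  unfold toD
  have h1 : l.length - 1 + 1 = l.length := by omega
  rw [h1, List.getD_eq_default _ _ (le_refl _),
    List.getD_eq_getElem _ _ (show l.length - 1 < l.length by omega)]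
  simp only [Nat.sub_zero]
  exact hp _ (List.getElem_mem _)

/-- reconstruct a partition list from its part-multiplicity function (value `i+1` has
multiplicity `r i`), using bound `B` -/
def fromM : ℕ → (ℕ → ℕ) → List ℕ
  | 0, _ => []
  | (B+1), r => List.replicate (r B) (B+1) ++ fromM B r

lemma mem_fromM : ∀ (B : ℕ) (r : ℕ → ℕ), ∀ x ∈ fromM B r, 1 ≤ x ∧ x ≤ B
  | 0, r => by simp [fromM]
  | (B+1), r => by
    intro x hx
    rcases List.mem_append.1 hx with hx | hx
    · have := List.eq_of_mem_replicate hx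
      omega
    · have := mem_fromM B r x hx
      omega

lemma mem_fromM_of {B i : ℕ} {r : ℕ → ℕ} (hi : i < B) (hr : 0 < r i) :
    (i + 1) ∈ fromM B r := by
  induction B with
  | zero => omega
  | succ B ih =>
    rw [fromM, List.mem_append]
    rcases Nat.lt_or_ge i B with h | h
    · exact Or.inr (ih h)
    · have : i = B := by omega
      subst this
      exact Or.inl (List.mem_replicate.2 ⟨by omega, rfl⟩)

lemma fromM_sorted : ∀ (B : ℕ) (r : ℕ → ℕ), (fromM B r).Pairwise (· ≥ ·)
  | 0, _ => List.Pairwise.nil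
  | (B+1), r => by
    rw [fromM, List.pairwise_append]
    refine ⟨List.pairwise_replicate.2 (Or.inr le_rfl), fromM_sorted B r, ?_⟩
    intro x hx y hy
    have hx' := List.eq_of_mem_replicate hx
    have hy' := mem_fromM B r y hy
    omega

lemma fromM_pos : ∀ (B : ℕ) (r : ℕ → ℕ), ∀ x ∈ fromM B r, 0 < x := by
  intro B r x hx
  have := mem_fromM B r x hx
  omega

lemma fromM_length : ∀ (B : ℕ) (r : ℕ → ℕ),
    (fromM B r).length = ∑ i ∈ Finset.range B, r i
  | 0, _ => by simp [fromM]
  | (B+1), r => by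
    rw [fromM, List.length_append, List.length_replicate, fromM_length B r,
      Finset.sum_range_succ]
    omega

lemma fromM_sum : ∀ (B : ℕ) (r : ℕ → ℕ),
    (fromM B r).sum = ∑ i ∈ Finset.range B, (i + 1) * r i
  | 0, _ => by simp [fromM]
  | (B+1), r => by
    rw [fromM, List.sum_append, List.sum_replicate, fromM_sum B r, Finset.sum_range_succ,
      smul_eq_mul]
    ring

lemma fromM_count : ∀ (B : ℕ) (r : ℕ → ℕ) (i : ℕ),
    (fromM B r).count (i + 1) = if i < B then r i else 0
  | 0, r, i => by simp [fromM]
  | (B+1), r, i => by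
    rw [fromM, List.count_append, List.count_replicate, fromM_count B r i]
    simp only [beq_iff_eq]
    rcases Nat.lt_trichotomy i B with h | h | h
    · simp only [if_pos h, if_pos (show i < B + 1 by omega), if_neg (show ¬(B+1 = i+1) by omega)]
      omega
    · subst h
      simp
    · simp only [if_neg (show ¬(i < B) by omega), if_neg (show ¬(i < B + 1) by omega),
        if_neg (show ¬(B+1 = i+1) by omega)]

lemma fromM_congr : ∀ (B : ℕ) {r r' : ℕ → ℕ}, (∀ i < B, r i = r' i) →
    fromM B r = fromM B r'
  | 0, _, _, _ => rfl
  | (B+1), r, r', h => by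
    rw [fromM, fromM, h B (by omega), fromM_congr B (fun i hi => h i (by omega))]

lemma eq_replicate_append (v : ℕ) : ∀ (ρ : List ℕ), ρ.Pairwise (· ≥ ·) → (∀ x ∈ ρ, x ≤ v) →
    ρ = List.replicate (ρ.count v) v ++ ρ.filter (fun x => x ≠ v)
  | [], _, _ => by simp
  | (a :: t), hs, hle => by
    have ht : t.Pairwise (· ≥ ·) := (List.pairwise_cons.1 hs).2
    have htle : ∀ x ∈ t, x ≤ v := fun x hx => hle x (List.mem_cons_of_mem a hx)
    by_cases hav : a = v
    · subst hav
      have := eq_replicate_append a t ht htle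
      rw [List.count_cons_self, List.replicate_succ, List.filter_cons]
      simp only [decide_not, decide_eq_true_eq]
      rw [if_neg (by simp)]
      simpa using this
    · have hnotmem : v ∉ a :: t := by
        intro hv
        have h1 := hle a (by simp)
        have h2 := mem_le_headI hs hv
        rw [List.headI_cons] at h2
        exact hav (by omega)
      rw [List.count_eq_zero.2 hnotmem, List.replicate_zero, List.nil_append,
        List.filter_eq_self.2]
      intro x hx
      have : x ≠ v := fun he => hnotmem (he ▸ hx)
      simpa using this

lemma fromM_cnt : ∀ (B : ℕ) (ρ : List ℕ), ρ.Pairwise (· ≥ ·) → (∀ x ∈ ρ, 0 < x) →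
    (∀ x ∈ ρ, x ≤ B) → fromM B (fun i => ρ.count (i + 1)) = ρ
  | 0, ρ, hs, hp, hle => by
    cases ρ with
    | nil => rfl
    | cons a t =>
      have := hp a (by simp)
      have := hle a (by simp)
      omega
  | (B+1), ρ, hs, hp, hle => by
    have hdec := eq_replicate_append (B+1) ρ hs hle
    set ρ' := ρ.filter (fun x => x ≠ B+1) with hρ'
    have hmem' : ∀ x ∈ ρ', x ∈ ρ ∧ x ≠ B+1 := by
      intro x hx
      rw [hρ', List.mem_filter] at hx
      exact ⟨hx.1, by simpa using hx.2⟩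
    have hs' : ρ'.Pairwise (· ≥ ·) := hs.filter _
    have hp' : ∀ x ∈ ρ', 0 < x := fun x hx => hp x (hmem' x hx).1
    have hle' : ∀ x ∈ ρ', x ≤ B := by
      intro x hx
      have h1 := hle x (hmem' x hx).1
      have h2 := (hmem' x hx).2
      omega
    have hcount : ∀ i < B, ρ.count (i+1) = ρ'.count (i+1) := by
      intro i hi
      conv_lhs => rw [hdec]
      rw [List.count_append, List.count_replicate]
      simp only [beq_iff_eq]
      rw [if_neg (show ¬(B+1 = i+1) by omega)]
      omega
    rw [fromM, fromM_congr B hcount, fromM_cnt B ρ' hs' hp' hle']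
    exact hdec.symm

lemma sum_range_even_odd (f : ℕ → ℕ) : ∀ (B : ℕ),
    ∑ j ∈ Finset.range (2 * B), f j
      = ∑ i ∈ Finset.range B, f (2 * i) + ∑ i ∈ Finset.range B, f (2 * i + 1)
  | 0 => by simp
  | (B+1) => by
    have h2 : 2 * (B + 1) = (2 * B + 1) + 1 := by ring
    rw [h2, Finset.sum_range_succ, Finset.sum_range_succ, Finset.sum_range_succ,
      Finset.sum_range_succ, sum_range_even_odd f B]
    ring

def PhiMap (l : List ℕ) : List ℕ × List ℕ :=
  (fromM l.length (fun i => toD l (2 * i)), fromD l.length (fun i => toD l (2 * i + 1)))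

def dPsi (p : List ℕ × List ℕ) (j : ℕ) : ℕ :=
  if j % 2 = 0 then p.1.count (j / 2 + 1) else toD p.2 (j / 2)

def PsiMap (p : List ℕ × List ℕ) : List ℕ :=
  fromD (2 * (p.1.headI + p.2.length)) (dPsi p)

lemma dPsi_even (p : List ℕ × List ℕ) (i : ℕ) : dPsi p (2 * i) = p.1.count (i + 1) := by
  unfold dPsi
  rw [if_pos (by omega)]
  congr 2
  omega

lemma dPsi_odd (p : List ℕ × List ℕ) (i : ℕ) : dPsi p (2 * i + 1) = toD p.2 i := by
  unfold dPsi
  rw [if_neg (by omega)]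
  congr 1
  omega

lemma phi_spec {N n : ℕ} {l : List ℕ} (hs : l.Pairwise (· ≥ ·)) (hp : ∀ x ∈ l, 0 < x)
    (hle : ∀ x ∈ l, x ≤ N) (hO : Osum l = n) :
    ((PhiMap l).1.Pairwise (· ≥ ·) ∧ ∀ x ∈ (PhiMap l).1, 0 < x) ∧
    ((PhiMap l).2.Pairwise (· ≥ ·) ∧ ∀ x ∈ (PhiMap l).2, 0 < x) ∧
    (PhiMap l).1.sum + (PhiMap l).2.sum = n ∧
    (PhiMap l).1.length + (PhiMap l).2.headI ≤ N := by
  set L := l.length with hL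
  set r : ℕ → ℕ := fun i => toD l (2 * i) with hr
  set t : ℕ → ℕ := fun i => toD l (2 * i + 1) with ht
  set σ := fromD L t with hσ
  have htv : ∀ k, L ≤ k → t k = 0 := fun k hk => toD_eq_zero (by omega)
  have hσs : σ.Pairwise (· ≥ ·) := fromD_sorted L t
  have hσlen : σ.length ≤ L := fromD_length L t
  have htoDσ : ∀ j, toD σ j = t j := toD_fromD htv
  refine ⟨⟨fromM_sorted L r, fromM_pos L r⟩, ⟨hσs, fromD_pos L t⟩, ?_, ?_⟩
  · show (fromM L r).sum + σ.sum = n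
    rw [fromM_sum, ← sum_toD_linear hσs hσlen]
    have h1 : ∑ j ∈ Finset.range L, (j + 1) * toD σ j
        = ∑ j ∈ Finset.range L, (j + 1) * t j :=
      Finset.sum_congr rfl (fun j _ => by rw [htoDσ])
    have h2 : ∑ i ∈ Finset.range L, (i + 1) * r i
        = ∑ i ∈ Finset.range L, (2 * i / 2 + 1) * toD l (2 * i) :=
      Finset.sum_congr rfl (fun i _ => by rw [hr]; congr 2; omega)
    have h3 : ∑ j ∈ Finset.range L, (j + 1) * t j
        = ∑ i ∈ Finset.range L, ((2 * i + 1) / 2 + 1) * toD l (2 * i + 1) :=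
      Finset.sum_congr rfl (fun i _ => by rw [ht]; congr 2; omega)
    rw [h1, h2, h3, ← sum_range_even_odd (fun j => (j / 2 + 1) * toD l j) L,
      (sum_toD_OE hs (show l.length ≤ 2 * L by omega)).1, hO]
  · show (fromM L r).length + σ.headI ≤ N
    rw [fromM_length, ← sum_toD_one hσs hσlen]
    have h1 : ∑ j ∈ Finset.range L, toD σ j = ∑ j ∈ Finset.range L, t j :=
      Finset.sum_congr rfl (fun j _ => by rw [htoDσ])
    rw [h1, ← sum_range_even_odd (fun j => toD l j) L,
      sum_toD_one hs (show l.length ≤ 2 * L by omega)]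
    cases l with
    | nil => exact Nat.zero_le N
    | cons a u => exact hle a (by simp)

lemma dPsi_vanish {p : List ℕ × List ℕ} (hs1 : p.1.Pairwise (· ≥ ·)) :
    ∀ j, 2 * (p.1.headI + p.2.length) ≤ j → dPsi p j = 0 := by
  intro j hj
  unfold dPsi
  split
  · refine List.count_eq_zero.2 (fun hmem => ?_)
    have := mem_le_headI hs1 hmem
    omega
  · exact toD_eq_zero (by omega)


lemma headI_mem {l : List ℕ} (h : l ≠ []) : l.headI ∈ l := by
  cases l with
  | nil => exact absurd rfl h
  | cons a t => simp

lemma PsiMap_eq (p : List ℕ × List ℕ) :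
    PsiMap p = fromD (2 * (p.1.headI + p.2.length)) (dPsi p) := rfl

lemma PhiMap_fst (l : List ℕ) :
    (PhiMap l).1 = fromM l.length (fun i => toD l (2 * i)) := rfl

lemma PhiMap_snd (l : List ℕ) :
    (PhiMap l).2 = fromD l.length (fun i => toD l (2 * i + 1)) := rfl

lemma psi_spec {p : List ℕ × List ℕ} (hρs : p.1.Pairwise (· ≥ ·)) (hρp : ∀ x ∈ p.1, 0 < x)
    (hσs : p.2.Pairwise (· ≥ ·)) :
    (PsiMap p).Pairwise (· ≥ ·) ∧ (∀ x ∈ PsiMap p, 0 < x) ∧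
    (∀ x ∈ PsiMap p, x ≤ p.1.length + p.2.headI) ∧
    Osum (PsiMap p) = p.1.sum + p.2.sum := by
  rw [PsiMap_eq]
  have hvan : ∀ j, 2 * (p.1.headI + p.2.length) ≤ j → dPsi p j = 0 := dPsi_vanish hρs
  have hl's := fromD_sorted (2 * (p.1.headI + p.2.length)) (dPsi p)
  have hlen := fromD_length (2 * (p.1.headI + p.2.length)) (dPsi p)
  have htoD := toD_fromD hvan
  have hρle : ∀ x ∈ p.1, x ≤ p.1.headI + p.2.length := fun x hx =>
    le_trans (mem_le_headI hρs hx) (Nat.le_add_right _ _)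
  have hρeq : fromM (p.1.headI + p.2.length) (fun i => p.1.count (i + 1)) = p.1 :=
    fromM_cnt _ p.1 hρs hρp hρle
  have hσlen : p.2.length ≤ p.1.headI + p.2.length := Nat.le_add_left _ _
  refine ⟨hl's, fromD_pos _ _, ?_, ?_⟩
  · intro x hx
    have h1 := mem_le_headI hl's hx
    have h2 : (fromD (2 * (p.1.headI + p.2.length)) (dPsi p)).headI
        = ∑ k ∈ Finset.range (2 * (p.1.headI + p.2.length)), dPsi p k := by
      rw [← getD_zero_headI, fromD_getD]
      simp
    rw [h2, sum_range_even_odd] at h1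
    have h3 : ∑ i ∈ Finset.range (p.1.headI + p.2.length), dPsi p (2 * i) = p.1.length := by
      conv_rhs => rw [← hρeq]
      rw [fromM_length]
      exact Finset.sum_congr rfl (fun i _ => dPsi_even p i)
    have h4 : ∑ i ∈ Finset.range (p.1.headI + p.2.length), dPsi p (2 * i + 1) = p.2.headI := by
      rw [← sum_toD_one hσs hσlen]
      exact Finset.sum_congr rfl (fun i _ => dPsi_odd p i)
    omega
  · rw [← (sum_toD_OE hl's hlen).1]
    have h0 : ∑ j ∈ Finset.range (2 * (p.1.headI + p.2.length)),
          (j / 2 + 1) * toD (fromD (2 * (p.1.headI + p.2.length)) (dPsi p)) j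
        = ∑ j ∈ Finset.range (2 * (p.1.headI + p.2.length)), (j / 2 + 1) * dPsi p j :=
      Finset.sum_congr rfl (fun j _ => by rw [htoD])
    rw [h0, sum_range_even_odd]
    have h3 : ∑ i ∈ Finset.range (p.1.headI + p.2.length),
        (2 * i / 2 + 1) * dPsi p (2 * i) = p.1.sum := by
      conv_rhs => rw [← hρeq]
      rw [fromM_sum]
      refine Finset.sum_congr rfl (fun i _ => ?_)
      rw [dPsi_even p i]
      congr 2
      omega
    have h4 : ∑ i ∈ Finset.range (p.1.headI + p.2.length),
        ((2 * i + 1) / 2 + 1) * dPsi p (2 * i + 1) = p.2.sum := by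
      rw [← sum_toD_linear hσs hσlen]
      refine Finset.sum_congr rfl (fun i _ => ?_)
      rw [dPsi_odd p i]
      congr 2
      omega
    rw [h3, h4]

lemma psi_phi {l : List ℕ} (hs : l.Pairwise (· ≥ ·)) (hp : ∀ x ∈ l, 0 < x) :
    PsiMap (PhiMap l) = l := by
  have htv : ∀ k, l.length ≤ k → toD l (2 * k + 1) = 0 := fun k hk => toD_eq_zero (by omega)
  have hfun : dPsi (PhiMap l) = toD l := by
    funext j
    unfold dPsi
    by_cases hj : j % 2 = 0
    · rw [if_pos hj, PhiMap_fst, fromM_count]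
      by_cases hlt : j / 2 < l.length
      · rw [if_pos hlt]
        show toD l (2 * (j / 2)) = toD l j
        congr 1
        omega
      · rw [if_neg hlt, toD_eq_zero (show l.length ≤ j by omega)]
    · rw [if_neg hj, PhiMap_snd]
      have : ∀ i, toD (fromD l.length (fun i => toD l (2 * i + 1))) i = toD l (2 * i + 1) :=
        toD_fromD htv
      rw [this]
      congr 1
      omega
  rw [PsiMap_eq, hfun]
  apply fromD_toD hs hp
  rw [PhiMap_fst, PhiMap_snd]
  rcases eq_or_ne l [] with h0 | hne
  · rw [h0]
    simp
  · have hm : 0 < toD l (l.length - 1) := toD_last hne hp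
    have hLpos : 0 < l.length := List.length_pos_iff.2 hne
    by_cases hpar : (l.length - 1) % 2 = 0
    · have h2i : 2 * ((l.length - 1) / 2) = l.length - 1 := by omega
      have hri : 0 < toD l (2 * ((l.length - 1) / 2)) := by rw [h2i]; exact hm
      have hiL : (l.length - 1) / 2 < l.length := by omega
      have hmem : ((l.length - 1) / 2 + 1) ∈ fromM l.length (fun i => toD l (2 * i)) :=
        mem_fromM_of hiL hri
      have hhead := mem_le_headI (fromM_sorted l.length (fun i => toD l (2 * i))) hmem
      omega
    · have h2i : 2 * ((l.length - 1) / 2) + 1 = l.length - 1 := by omega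
      have hti : 0 < toD l (2 * ((l.length - 1) / 2) + 1) := by rw [h2i]; exact hm
      have hiL : (l.length - 1) / 2 < l.length := by omega
      have := fromD_lt_length (d := fun i => toD l (2 * i + 1)) hiL (by exact hti)
      omega

lemma phi_psi {p : List ℕ × List ℕ} (hρs : p.1.Pairwise (· ≥ ·)) (hρp : ∀ x ∈ p.1, 0 < x)
    (hσs : p.2.Pairwise (· ≥ ·)) (hσp : ∀ x ∈ p.2, 0 < x) :
    PhiMap (PsiMap p) = p := by
  have hvan : ∀ j, 2 * (p.1.headI + p.2.length) ≤ j → dPsi p j = 0 := dPsi_vanish hρs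
  have htoD := toD_fromD hvan
  have hL' : ∀ k, k < 2 * (p.1.headI + p.2.length) → 0 < dPsi p k →
      k < (PsiMap p).length := by
    intro k h1 h2
    rw [PsiMap_eq]
    exact fromD_lt_length h1 h2
  refine Prod.ext ?_ ?_
  · rw [PhiMap_fst]
    have hf : (fun i => toD (PsiMap p) (2 * i)) = fun i => p.1.count (i + 1) := by
      funext i
      rw [PsiMap_eq, htoD, dPsi_even]
    rw [hf]
    apply fromM_cnt _ p.1 hρs hρp
    intro x hx
    have hne1 : p.1 ≠ [] := List.ne_nil_of_mem hx
    have hxh := mem_le_headI hρs hx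
    have hh1 : 0 < p.1.headI := lt_of_lt_of_le (hρp x hx) hxh
    have hcnt : 0 < dPsi p (2 * (p.1.headI - 1)) := by
      rw [dPsi_even, show p.1.headI - 1 + 1 = p.1.headI by omega]
      exact List.count_pos_iff.2 (headI_mem hne1)
    have hlt := hL' _ (by omega) hcnt
    omega
  · rw [PhiMap_snd]
    have hf : (fun i => toD (PsiMap p) (2 * i + 1)) = toD p.2 := by
      funext i
      rw [PsiMap_eq, htoD, dPsi_odd]
    rw [hf]
    apply fromD_toD hσs hσp
    rcases eq_or_ne p.2 [] with h0 | hne2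
    · rw [h0]
      simp
    · have hσpos : 0 < p.2.length := List.length_pos_iff.2 hne2
      have hσlast : 0 < toD p.2 (p.2.length - 1) := toD_last hne2 hσp
      have hcnt : 0 < dPsi p (2 * (p.2.length - 1) + 1) := by
        rw [dPsi_odd]
        exact hσlast
      have hlt := hL' _ (by omega) hcnt
      omega

end AP

/-- The number of partitions with parts `≤ N` and `O(π) = n` equals the number of 2-color
partitions `(ρ, σ)` of `n` (`ρ` red, `σ` green) such that the number of parts of `ρ` plus
the largest part of `σ` is at most `N`. -/
theorem finite_uncu_andrews_paule (N n : ℕ) :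
    Nat.card {l : List ℕ // IsPartition l ∧ (∀ x ∈ l, x ≤ N) ∧ Osum l = n} =
      Nat.card {p : List ℕ × List ℕ //
        IsPartition p.1 ∧ IsPartition p.2 ∧ p.1.sum + p.2.sum = n ∧
          p.1.length + p.2.headI ≤ N} := by
  refine Nat.card_congr ⟨fun x => ⟨AP.PhiMap x.1, ?_⟩, fun y => ⟨AP.PsiMap y.1, ?_⟩,
    fun x => ?_, fun y => ?_⟩
  · obtain ⟨hP, hle, hO⟩ := x.2
    obtain ⟨h1, h2, h3, h4⟩ := AP.phi_spec hP.1 hP.2 hle hO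
    exact ⟨h1, h2, h3, h4⟩
  · obtain ⟨hP1, hP2, hsum, hN⟩ := y.2
    obtain ⟨h1, h2, h3, h4⟩ := AP.psi_spec hP1.1 hP1.2 hP2.1
    exact ⟨⟨h1, h2⟩, fun z hz => le_trans (h3 z hz) hN, by rw [h4, hsum]⟩
  · obtain ⟨hP, -, -⟩ := x.2
    exact Subtype.ext (AP.psi_phi hP.1 hP.2)
  · obtain ⟨hP1, hP2, -, -⟩ := y.2
    exact Subtype.ext (AP.phi_psi hP1.1 hP1.2 hP2.1 hP2.2)
end

section
/- For all nonnegative integers N, j, n, the number of partitions π into distinct parts with largest part ≤ N, O(π) = n and γ(π) = j equals the number of partitions of n into exactly j parts whose largest hook length is at most N, i.e., partitions μ = (μ1, …, μj) of n into exactly j parts with μ1 + j − 1 ≤ N. -/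
namespace RFSH

/-! ### Basic lemmas about `Osum`, `Esum`, `gammaSum` -/

@[simp] lemma Osum_nil : Osum [] = 0 := rfl
@[simp] lemma Esum_nil : Esum [] = 0 := rfl

lemma Osum_cons (a : ℕ) (l : List ℕ) : Osum (a :: l) = a + Esum l := by
  cases l with
  | nil => simp [Osum, Esum, sumAlt]
  | cons b t => rfl

lemma Esum_cons (a : ℕ) (l : List ℕ) : Esum (a :: l) = Osum l := rfl

lemma gammaSum_def (l : List ℕ) : gammaSum l = Osum l - Esum l := rfl

lemma sdp_cons {a : ℕ} {l : List ℕ} :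
    IsDistinctPartition (a :: l) ↔ (∀ x ∈ l, x < a) ∧ 0 < a ∧ IsDistinctPartition l := by
  simp only [IsDistinctPartition, List.pairwise_cons, List.forall_mem_cons]
  constructor
  · rintro ⟨⟨h1, h2⟩, h3, h4⟩
    exact ⟨h1, h3, h2, h4⟩
  · rintro ⟨h1, h2, h3, h4⟩
    exact ⟨⟨h1, h3⟩, h2, h4⟩

lemma part_cons {a : ℕ} {l : List ℕ} :
    IsPartition (a :: l) ↔ (∀ x ∈ l, x ≤ a) ∧ 0 < a ∧ IsPartition l := by
  simp only [IsPartition, List.pairwise_cons, List.forall_mem_cons]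
  constructor
  · rintro ⟨⟨h1, h2⟩, h3, h4⟩
    exact ⟨h1, h3, h2, h4⟩
  · rintro ⟨h1, h2, h3, h4⟩
    exact ⟨⟨h1, h3⟩, h2, h4⟩

lemma sdp_nil : IsDistinctPartition [] := ⟨List.Pairwise.nil, by simp⟩

lemma part_nil : IsPartition [] := ⟨List.Pairwise.nil, by simp⟩

lemma mem_le_headI {l : List ℕ} (h : IsDistinctPartition l) {x : ℕ} (hx : x ∈ l) :
    x ≤ l.headI := by
  cases l with
  | nil => simp at hx
  | cons a L =>
    rcases List.mem_cons.mp hx with rfl | hx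
    · exact le_rfl
    · exact le_of_lt ((sdp_cons.mp h).1 x hx)

lemma esum_osum : ∀ l : List ℕ, IsDistinctPartition l →
    Esum l ≤ Osum l ∧ Osum l ≤ l.headI + Esum l
  | [] => fun _ => by simp
  | [a] => fun _ => by simp [Osum_cons, Esum_cons]
  | a :: b :: L => fun h => by
    obtain ⟨h1, h2, h3⟩ := sdp_cons.mp h
    obtain ⟨h4, h5, h6⟩ := sdp_cons.mp h3
    have ih := esum_osum L h6
    have hb : b < a := h1 b (by simp)
    have hL : L.headI ≤ b := by
      cases L with
      | nil => simp
      | cons c t => exact le_of_lt (h4 c (by simp))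
    simp only [Osum_cons, Esum_cons, List.headI_cons] at *
    omega

lemma osum_tail {x : ℕ} {M : List ℕ} (hlt : ∀ y ∈ M, y < x) (hM : IsDistinctPartition M) :
    Osum M ≤ x - 1 + Esum M ∧ Esum M ≤ Osum M := by
  have h := esum_osum M hM
  cases M with
  | nil => simp
  | cons c t =>
    have : c < x := hlt c (by simp)
    simp only [List.headI_cons] at h
    omega

lemma gamma_pos {a : ℕ} {L : List ℕ} (h : IsDistinctPartition (a :: L)) :
    1 ≤ gammaSum (a :: L) := by
  obtain ⟨h1, h2, h3⟩ := sdp_cons.mp h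
  have ho := osum_tail h1 h3
  simp only [gammaSum_def, Osum_cons, Esum_cons]
  omega

lemma ap_ne_nil' {j : ℕ} {l : List ℕ} (hl : IsDistinctPartition l) (hg : gammaSum l = j + 1) :
    l ≠ [] := by
  rintro rfl
  simp [gammaSum_def] at hg

/-! ### The involution `Tmap` -/

/-- `[m]` if `m ≠ 0`, else `[]`. -/
def pad (m : ℕ) : List ℕ := if m = 0 then [] else [m]

lemma pad_osum (m : ℕ) : Osum (pad m) = m := by
  by_cases h : m = 0 <;> simp [pad, h, Osum, sumAlt]

lemma pad_esum (m : ℕ) : Esum (pad m) = 0 := by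
  by_cases h : m = 0 <;> simp [pad, h, Esum, sumAlt]

/-- The involution reflecting each even-indexed part of a distinct partition inside the
open interval determined by its odd-indexed neighbours. -/
def Tmap : List ℕ → List ℕ
  | [] => []
  | [a] => a :: pad (a - 1)
  | [a, b] => a :: pad (a - 1 - b)
  | a :: b :: c :: l => a :: (a + c - b) :: Tmap (c :: l)

lemma Tmap_cons (a : ℕ) (l : List ℕ) : ∃ t, Tmap (a :: l) = a :: t := by
  match l with
  | [] => exact ⟨_, rfl⟩
  | [b] => exact ⟨_, rfl⟩
  | b :: c :: t => exact ⟨_, rfl⟩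

lemma Tmap_headI (l : List ℕ) : (Tmap l).headI = l.headI := by
  match l with
  | [] => rfl
  | [a] => rfl
  | [a, b] => rfl
  | a :: b :: c :: t => rfl

lemma Tmap_sdp : ∀ l : List ℕ, IsDistinctPartition l →
    IsDistinctPartition (Tmap l) ∧ ∀ x ∈ Tmap l, x ≤ l.headI
  | [] => fun h => ⟨h, by simp [Tmap]⟩
  | [a] => fun h => by
    have ha : 0 < a := (sdp_cons.mp h).2.1
    by_cases h1 : a - 1 = 0
    · have hp : pad (a - 1) = [] := by simp [pad, h1]
      refine ⟨?_, ?_⟩ <;> simp [Tmap, hp, sdp_cons, sdp_nil, ha]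
    · have hp : pad (a - 1) = [a - 1] := by simp [pad, h1]
      refine ⟨?_, ?_⟩ <;> simp [Tmap, hp, sdp_cons, sdp_nil] <;> omega
  | [a, b] => fun h => by
    obtain ⟨h1, h2, h3⟩ := sdp_cons.mp h
    have hb : b < a := h1 b (by simp)
    have hb0 : 0 < b := (sdp_cons.mp h3).2.1
    by_cases h4 : a - 1 - b = 0
    · have hp : pad (a - 1 - b) = [] := by simp [pad, h4]
      refine ⟨?_, ?_⟩ <;> simp [Tmap, hp, sdp_cons, sdp_nil, h2]
    · have hp : pad (a - 1 - b) = [a - 1 - b] := by simp [pad, h4]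
      refine ⟨?_, ?_⟩ <;> simp [Tmap, hp, sdp_cons, sdp_nil] <;> omega
  | a :: b :: c :: l => fun h => by
    obtain ⟨h1, h2, h3⟩ := sdp_cons.mp h
    obtain ⟨h4, h5, h6⟩ := sdp_cons.mp h3
    have ih := Tmap_sdp (c :: l) h6
    have hb : b < a := h1 b (by simp)
    have hc : c < b := h4 c (by simp)
    have hc0 : 0 < c := (sdp_cons.mp h6).2.1
    have hbd : ∀ x ∈ Tmap (c :: l), x ≤ c := by
      intro x hx; simpa using ih.2 x hx
    constructor
    · show IsDistinctPartition (a :: (a + c - b) :: Tmap (c :: l))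
      rw [sdp_cons, sdp_cons]
      refine ⟨?_, h2, ?_, by omega, ih.1⟩
      · intro x hx
        rcases List.mem_cons.mp hx with rfl | hx
        · omega
        · have := hbd x hx; omega
      · intro x hx
        have := hbd x hx; omega
    · show ∀ x ∈ a :: (a + c - b) :: Tmap (c :: l), x ≤ (a :: b :: c :: l).headI
      intro x hx
      simp only [List.headI_cons]
      rcases List.mem_cons.mp hx with rfl | hx
      · exact le_rfl
      rcases List.mem_cons.mp hx with rfl | hx
      · omega
      · have := hbd x hx; omega

lemma Tmap_osum : ∀ l : List ℕ, Osum (Tmap l) = Osum l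
  | [] => rfl
  | [a] => by simp [Tmap, Osum_cons, pad_esum]
  | [a, b] => by simp [Tmap, Osum_cons, pad_esum, Esum_cons]
  | a :: b :: c :: l => by
    have ih := Tmap_osum (c :: l)
    show Osum (a :: (a + c - b) :: Tmap (c :: l)) = _
    simp only [Osum_cons, Esum_cons] at *
    omega

lemma Tmap_erel : ∀ l : List ℕ, IsDistinctPartition l → l ≠ [] →
    Esum (Tmap l) + Esum l + l.headI + 1 = 2 * Osum l
  | [] => fun _ h => absurd rfl h
  | [a] => fun h _ => by
    have ha : 0 < a := (sdp_cons.mp h).2.1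
    show Esum (a :: pad (a - 1)) + _ + _ + _ = _
    simp only [Esum_cons, pad_osum, Osum_cons, Esum_nil, Osum_nil, List.headI_cons]
    omega
  | [a, b] => fun h _ => by
    obtain ⟨h1, h2, h3⟩ := sdp_cons.mp h
    have hb : b < a := h1 b (by simp)
    show Esum (a :: pad (a - 1 - b)) + _ + _ + _ = _
    simp only [Esum_cons, pad_osum, Osum_cons, Esum_cons, Osum_nil, Esum_nil, List.headI_cons]
    omega
  | a :: b :: c :: l => fun h _ => by
    obtain ⟨h1, h2, h3⟩ := sdp_cons.mp h
    obtain ⟨h4, h5, h6⟩ := sdp_cons.mp h3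
    have ih := Tmap_erel (c :: l) h6 (by simp)
    have hb : b < a := h1 b (by simp)
    show Esum (a :: (a + c - b) :: Tmap (c :: l)) + _ + _ + _ = _
    simp only [Esum_cons, Osum_cons, List.headI_cons] at *
    omega

lemma Tmap_invol : ∀ l : List ℕ, IsDistinctPartition l → Tmap (Tmap l) = l
  | [] => fun _ => rfl
  | [a] => fun h => by
    have ha : 0 < a := (sdp_cons.mp h).2.1
    by_cases h1 : a - 1 = 0
    · have ha1 : a = 1 := by omega
      subst ha1
      rfl
    · have hp : pad (a - 1) = [a - 1] := by simp [pad, h1]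
      show Tmap (a :: pad (a - 1)) = [a]
      rw [hp]
      show a :: pad (a - 1 - (a - 1)) = [a]
      have : a - 1 - (a - 1) = 0 := by omega
      simp [this, pad]
  | [a, b] => fun h => by
    obtain ⟨h1, h2, h3⟩ := sdp_cons.mp h
    have hb : b < a := h1 b (by simp)
    have hb0 : 0 < b := (sdp_cons.mp h3).2.1
    by_cases h4 : a - 1 - b = 0
    · have hp : pad (a - 1 - b) = [] := by simp [pad, h4]
      show Tmap (a :: pad (a - 1 - b)) = [a, b]
      rw [hp]
      show a :: pad (a - 1) = [a, b]
      have hb1 : a - 1 = b := by omega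
      have hb' : b ≠ 0 := by omega
      rw [hb1]
      simp [pad, hb']
    · have hp : pad (a - 1 - b) = [a - 1 - b] := by simp [pad, h4]
      show Tmap (a :: pad (a - 1 - b)) = [a, b]
      rw [hp]
      show a :: pad (a - 1 - (a - 1 - b)) = [a, b]
      have hx : a - 1 - (a - 1 - b) = b := by omega
      rw [hx]
      simp [pad]
      omega
  | a :: b :: c :: l => fun h => by
    obtain ⟨h1, h2, h3⟩ := sdp_cons.mp h
    obtain ⟨h4, h5, h6⟩ := sdp_cons.mp h3
    have hb : b < a := h1 b (by simp)
    obtain ⟨t, ht⟩ := Tmap_cons c l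
    have ih := Tmap_invol (c :: l) h6
    show Tmap (a :: (a + c - b) :: Tmap (c :: l)) = a :: b :: c :: l
    rw [ht]
    show a :: (a + c - (a + c - b)) :: Tmap (c :: t) = a :: b :: c :: l
    have hx : a + c - (a + c - b) = b := by omega
    rw [hx, ← ht, ih]

lemma Tmap_gamma (l : List ℕ) (h : IsDistinctPartition l) (hne : l ≠ []) :
    gammaSum (Tmap l) + gammaSum l = l.headI + 1 := by
  have h1 := Tmap_sdp l h
  have h2 := Tmap_osum l
  have h3 := Tmap_erel l h hne
  have h4 := (esum_osum l h).1
  have h5 := (esum_osum _ h1.1).1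
  simp only [gammaSum_def]
  omega

/-! ### The two counted predicates and finiteness -/

def AP (N j n : ℕ) (l : List ℕ) : Prop :=
  IsDistinctPartition l ∧ (∀ x ∈ l, x ≤ N) ∧ Osum l = n ∧ gammaSum l = j

def BP (N j n : ℕ) (l : List ℕ) : Prop :=
  IsPartition l ∧ l.sum = n ∧ l.length = j ∧ l.headI + l.length ≤ N + 1

lemma finite_bdd (k m : ℕ) : {l : List ℕ | l.length ≤ k ∧ ∀ x ∈ l, x ≤ m}.Finite := by
  induction k with
  | zero =>
    apply Set.Finite.subset (Set.finite_singleton ([] : List ℕ))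
    rintro l ⟨hl, -⟩
    simp only [Set.mem_singleton_iff]
    exact List.length_eq_zero_iff.mp (Nat.le_zero.mp hl)
  | succ k ih =>
    apply Set.Finite.subset
      (Set.Finite.insert [] (Set.Finite.image (fun p : ℕ × List ℕ => p.1 :: p.2)
        ((Set.finite_Icc 0 m).prod ih)))
    rintro l ⟨hl, hb⟩
    cases l with
    | nil => exact Set.mem_insert _ _
    | cons a t =>
      refine Set.mem_insert_iff.mpr (Or.inr ⟨(a, t), ⟨?_, ?_, ?_⟩, rfl⟩)
      · exact ⟨Nat.zero_le _, hb a (by simp)⟩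
      · simpa using hl
      · exact fun x hx => hb x (List.mem_cons_of_mem _ hx)

lemma sdp_length : ∀ (l : List ℕ) (N : ℕ), IsDistinctPartition l →
    (∀ x ∈ l, x ≤ N) → l.length ≤ N
  | [], _ => fun _ _ => Nat.zero_le _
  | a :: L, N => fun h hb => by
    obtain ⟨h1, h2, h3⟩ := sdp_cons.mp h
    have hL : ∀ x ∈ L, x ≤ a - 1 := fun x hx => by have := h1 x hx; omega
    have := sdp_length L (a - 1) h3 hL
    have ha := hb a (by simp)
    simp only [List.length_cons]
    omega

instance finA (N j n : ℕ) : Finite {l : List ℕ // AP N j n l} := by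
  have hf := (finite_bdd N N).to_subtype
  exact Finite.of_injective
    (fun y => (⟨y.1, ⟨sdp_length y.1 N y.2.1 y.2.2.1, y.2.2.1⟩⟩ :
      {l : List ℕ | l.length ≤ N ∧ ∀ x ∈ l, x ≤ N}))
    (by intro ⟨a, ha⟩ ⟨b, hb⟩ hab; simpa using hab)

instance finB (N j n : ℕ) : Finite {l : List ℕ // BP N j n l} := by
  have hf := (finite_bdd j n).to_subtype
  refine Finite.of_injective
    (fun y => (⟨y.1, ⟨le_of_eq y.2.2.2.1, fun x hx => ?_⟩⟩ :
      {l : List ℕ | l.length ≤ j ∧ ∀ x ∈ l, x ≤ n}))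
    (by intro ⟨a, ha⟩ ⟨b, hb⟩ hab; simpa using hab)
  calc x ≤ y.1.sum := List.single_le_sum (fun z _ => Nat.zero_le z) x hx
  _ = n := y.2.2.1

lemma card_split {α : Type} (P C : α → Prop) [Finite {x // P x}] :
    Nat.card {x // P x} = Nat.card {x // P x ∧ C x} + Nat.card {x // P x ∧ ¬ C x} := by
  classical
  rw [← Nat.card_congr (Equiv.sumCompl (fun y : {x // P x} => C y.1)), Nat.card_sum,
    Nat.card_congr (Equiv.subtypeSubtypeEquivSubtypeInter P C),
    Nat.card_congr (Equiv.subtypeSubtypeEquivSubtypeInter P (fun x => ¬ C x))]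

lemma card_empty_subtype {P : List ℕ → Prop} (h : ∀ l, ¬ P l) : Nat.card {l // P l} = 0 := by
  have : IsEmpty {l // P l} := ⟨fun x => h x.1 x.2⟩
  exact Nat.card_of_isEmpty

lemma card_singleton_subtype {P : List ℕ → Prop} (l0 : List ℕ) (h0 : P l0)
    (h : ∀ l, P l → l = l0) : Nat.card {l // P l} = 1 := by
  rw [Nat.card_eq_one_iff_unique]
  exact ⟨⟨fun a b => Subtype.ext ((h a.1 a.2).trans (h b.1 b.2).symm)⟩, ⟨⟨l0, h0⟩⟩⟩

/-! ### Recurrence for the distinct-parts side -/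

def CA (l : List ℕ) : Prop := l.tail = [] ∨ l.tail.headI + 2 ≤ l.headI

lemma CA_def {l : List ℕ} : CA l ↔ (l.tail = [] ∨ l.tail.headI + 2 ≤ l.headI) := Iff.rfl

lemma e1_to {N j n a : ℕ} {L : List ℕ} (h : AP (N + 1) (j + 1) (n + 1) (a :: L))
    (hC : CA (a :: L)) : AP N j n (pad (a - 1) ++ L) := by
  obtain ⟨hsd, hb, hO, hg⟩ := h
  obtain ⟨hlt, hpa, hsdL⟩ := sdp_cons.mp hsd
  have haN : a ≤ N + 1 := hb a (by simp)
  simp only [Osum_cons, Esum_cons] at hO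
  simp only [gammaSum_def, Osum_cons, Esum_cons] at hg
  cases L with
  | nil =>
    by_cases h1 : a = 1
    · subst h1
      have hp : pad (1 - 1) = [] := by simp [pad]
      rw [hp]
      simp only [Esum_nil, Osum_nil] at hO hg
      exact ⟨sdp_nil, by simp, by simp; omega, by simp [gammaSum_def]; omega⟩
    · have hp : pad (a - 1) = [a - 1] := by simp [pad]; omega
      rw [hp]
      simp only [Esum_nil, Osum_nil] at hO hg
      refine ⟨sdp_cons.mpr ⟨by simp, by omega, sdp_nil⟩, ?_, ?_, ?_⟩
      · simp; omega
      · simp only [List.append_nil, Osum_cons, Esum_nil]; omega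
      · simp only [List.append_nil, gammaSum_def, Osum_cons, Esum_cons, Osum_nil, Esum_nil]
        omega
  | cons c t =>
    have hc : c + 2 ≤ a := by
      rcases CA_def.mp hC with h' | h'
      · simp at h'
      · simpa using h'
    have hp : pad (a - 1) = [a - 1] := by simp [pad]; omega
    rw [hp]
    have ho := osum_tail hlt hsdL
    have hhd : ∀ x ∈ c :: t, x ≤ c := fun x hx => mem_le_headI hsdL hx
    simp only [Esum_cons, Osum_cons] at hO hg
    simp only [Osum_cons, Esum_cons, List.headI_cons] at ho
    refine ⟨sdp_cons.mpr ⟨fun x hx => by have := hhd x hx; omega, by omega, hsdL⟩, ?_, ?_, ?_⟩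
    · intro x hx
      rcases List.mem_cons.mp hx with rfl | hx
      · omega
      · have := hlt x hx; omega
    · simp only [List.cons_append, List.nil_append, Osum_cons, Esum_cons]
      omega
    · simp only [List.cons_append, List.nil_append, gammaSum_def, Osum_cons, Esum_cons]
      omega

lemma e1_inv {N j n : ℕ} {m : List ℕ} (h : AP N j n m) :
    AP (N + 1) (j + 1) (n + 1) ((m.headI + 1) :: m.tail) ∧ CA ((m.headI + 1) :: m.tail) := by
  obtain ⟨hsd, hb, hO, hg⟩ := h
  cases m with
  | nil =>
    simp only [Osum_nil] at hO
    simp only [gammaSum_def, Osum_nil, Esum_nil] at hg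
    have hh : ([] : List ℕ).headI = 0 := rfl
    constructor
    · refine ⟨sdp_cons.mpr ⟨by simp [hh], by simp [hh], sdp_nil⟩, by simp [hh], ?_, ?_⟩
      · simp only [hh, List.tail_nil, Osum_cons, Esum_nil]; omega
      · simp only [hh, List.tail_nil, gammaSum_def, Osum_cons, Esum_cons,
          Osum_nil, Esum_nil]
        omega
    · exact CA_def.mpr (Or.inl rfl)
  | cons x M =>
    obtain ⟨hlt, hpx, hsdM⟩ := sdp_cons.mp hsd
    have ho := osum_tail hlt hsdM
    simp only [Osum_cons] at hO
    simp only [gammaSum_def, Osum_cons, Esum_cons] at hg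
    have hxN : x ≤ N := hb x (by simp)
    simp only [List.headI_cons, List.tail_cons]
    constructor
    · refine ⟨sdp_cons.mpr ⟨fun y hy => by have := hlt y hy; omega, by omega, hsdM⟩, ?_, ?_, ?_⟩
      · intro y hy
        rcases List.mem_cons.mp hy with rfl | hy
        · omega
        · have := hb y (List.mem_cons_of_mem _ hy); omega
      · simp only [List.headI_cons, List.tail_cons, Osum_cons]; omega
      · simp only [List.headI_cons, List.tail_cons, gammaSum_def, Osum_cons, Esum_cons]; omega
    · cases M with
      | nil => exact CA_def.mpr (Or.inl rfl)
      | cons c t =>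
        refine CA_def.mpr (Or.inr ?_)
        have : c < x := hlt c (by simp)
        simp only [List.tail_cons, List.headI_cons]
        omega

def equivA1 (N j n : ℕ) :
    {l : List ℕ // (AP (N + 1) (j + 1) (n + 1) l ∧ CA l)} ≃ {l : List ℕ // AP N j n l} where
  toFun x := ⟨pad (x.1.headI - 1) ++ x.1.tail, by
    obtain ⟨l, hl, hC⟩ := x
    cases l with
    | nil => exact absurd rfl (ap_ne_nil' hl.1 hl.2.2.2)
    | cons a L => exact e1_to hl hC⟩
  invFun y := ⟨(y.1.headI + 1) :: y.1.tail, (e1_inv y.2).1, (e1_inv y.2).2⟩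
  left_inv := by
    rintro ⟨l, hl, hC⟩
    cases l with
    | nil => exact absurd rfl (ap_ne_nil' hl.1 hl.2.2.2)
    | cons a L =>
      apply Subtype.ext
      have ha : 0 < a := (sdp_cons.mp hl.1).2.1
      by_cases h1 : a = 1
      · subst h1
        have hL : L = [] := by
          cases L with
          | nil => rfl
          | cons c t =>
            have := (sdp_cons.mp hl.1).1 c (by simp)
            have := (sdp_cons.mp (sdp_cons.mp hl.1).2.2).2.1
            omega
        subst hL
        simp [pad]
      · have hp : pad (a - 1) = [a - 1] := by simp [pad]; omega
        simp only [List.headI_cons, List.tail_cons, hp, List.cons_append, List.nil_append,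
          List.headI_cons, List.tail_cons]
        congr 1
        omega
  right_inv := by
    rintro ⟨m, hm⟩
    apply Subtype.ext
    cases m with
    | nil => simp [pad]
    | cons x M =>
      have hpx : 0 < x := (sdp_cons.mp hm.1).2.1
      have hp : pad x = [x] := by simp [pad]; omega
      simp [hp]

lemma e2_to {N j n a : ℕ} {L : List ℕ} (h : AP (N + 1) (j + 1) (n + 1) (a :: L))
    (hC : ¬ CA (a :: L)) : AP N (j + 1) (n - j) (Tmap L) := by
  obtain ⟨hsd, hb, hO, hg⟩ := h
  obtain ⟨hlt, hpa, hsdL⟩ := sdp_cons.mp hsd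
  rw [CA_def] at hC
  push_neg at hC
  simp only [List.tail_cons, List.headI_cons] at hC
  obtain ⟨hLne, hCa⟩ := hC
  have ha : a = L.headI + 1 := by
    cases L with
    | nil => exact absurd rfl hLne
    | cons c t =>
      have := hlt c (by simp)
      simp only [List.headI_cons] at hCa ⊢
      omega
  have hT := Tmap_sdp L hsdL
  have hOT := Tmap_osum L
  have hgT := Tmap_gamma L hsdL hLne
  have heo := esum_osum L hsdL
  have haN : a ≤ N + 1 := hb a (by simp)
  simp only [Osum_cons, Esum_cons] at hO
  simp only [gammaSum_def, Osum_cons, Esum_cons] at hg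
  refine ⟨hT.1, ?_, ?_, ?_⟩
  · intro x hx
    have := hT.2 x hx
    omega
  · omega
  · simp only [gammaSum_def] at hgT ⊢
    omega

lemma e2_inv {N j n : ℕ} {m : List ℕ} (h : AP N (j + 1) (n - j) m) :
    AP (N + 1) (j + 1) (n + 1) ((m.headI + 1) :: Tmap m) ∧
      ¬ CA ((m.headI + 1) :: Tmap m) := by
  obtain ⟨hsd, hb, hO, hg⟩ := h
  have hmne : m ≠ [] := ap_ne_nil' hsd hg
  have hT := Tmap_sdp m hsd
  have hOT := Tmap_osum m
  have hgT := Tmap_gamma m hsd hmne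
  have heo := esum_osum m hsd
  have heoT := esum_osum _ hT.1
  have herel := Tmap_erel m hsd hmne
  have hhm : m.headI ≤ N := by
    apply hb
    cases m with
    | nil => exact absurd rfl hmne
    | cons x M => simp
  obtain ⟨t, ht⟩ : ∃ t, Tmap m = m.headI :: t := by
    cases m with
    | nil => exact absurd rfl hmne
    | cons x M =>
      obtain ⟨t, ht⟩ := Tmap_cons x M
      exact ⟨t, by simp [ht]⟩
  constructor
  · refine ⟨sdp_cons.mpr ⟨fun y hy => by have := hT.2 y hy; omega, by omega, hT.1⟩, ?_, ?_, ?_⟩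
    · intro y hy
      rcases List.mem_cons.mp hy with rfl | hy
      · omega
      · have := hT.2 y hy; omega
    · simp only [Osum_cons, Esum_cons] at herel ⊢
      simp only [gammaSum_def] at hg
      omega
    · simp only [gammaSum_def, Osum_cons, Esum_cons] at hg ⊢
      omega
  · intro hC
    rcases CA_def.mp hC with h' | h'
    · simp only [List.tail_cons] at h'
      rw [ht] at h'
      exact absurd h' (by simp)
    · simp only [List.tail_cons, List.headI_cons, Tmap_headI] at h'
      omega

def equivA2 (N j n : ℕ) :
    {l : List ℕ // (AP (N + 1) (j + 1) (n + 1) l ∧ ¬ CA l)} ≃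
      {l : List ℕ // AP N (j + 1) (n - j) l} where
  toFun x := ⟨Tmap x.1.tail, by
    obtain ⟨l, hl, hC⟩ := x
    cases l with
    | nil => exact absurd rfl (ap_ne_nil' hl.1 hl.2.2.2)
    | cons a L => exact e2_to hl hC⟩
  invFun y := ⟨(y.1.headI + 1) :: Tmap y.1, (e2_inv y.2).1, (e2_inv y.2).2⟩
  left_inv := by
    rintro ⟨l, hl, hC⟩
    cases l with
    | nil => exact absurd rfl (ap_ne_nil' hl.1 hl.2.2.2)
    | cons a L =>
      apply Subtype.ext
      rw [CA_def] at hC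
      push_neg at hC
      simp only [List.tail_cons, List.headI_cons] at hC ⊢
      obtain ⟨hLne, hCa⟩ := hC
      have hsdL : IsDistinctPartition L := (sdp_cons.mp hl.1).2.2
      have ha : a = L.headI + 1 := by
        cases L with
        | nil => exact absurd rfl hLne
        | cons c t =>
          have := (sdp_cons.mp hl.1).1 c (by simp)
          simp only [List.headI_cons] at hCa ⊢
          omega
      rw [Tmap_headI, Tmap_invol L hsdL, ← ha]
  right_inv := by
    rintro ⟨m, hm⟩
    apply Subtype.ext
    simp only [List.tail_cons]
    exact Tmap_invol m hm.1

lemma cardA_rec (N j n : ℕ) :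
    Nat.card {l : List ℕ // AP (N + 1) (j + 1) (n + 1) l} =
      Nat.card {l : List ℕ // AP N j n l} +
        Nat.card {l : List ℕ // AP N (j + 1) (n - j) l} := by
  rw [card_split (AP (N + 1) (j + 1) (n + 1)) CA,
    Nat.card_congr (equivA1 N j n), Nat.card_congr (equivA2 N j n)]

/-! ### Recurrence for the hook side -/

lemma dropLast_append_one : ∀ l : List ℕ, l.Pairwise (· ≥ ·) → (∀ x ∈ l, 0 < x) → 1 ∈ l →
    l.dropLast ++ [1] = l
  | [] => by intro _ _ h; simp at h
  | [a] => by
    intro _ _ h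
    simp only [List.mem_singleton] at h
    simp [← h]
  | a :: b :: t => by
    intro hs hp h1
    have hs' := List.pairwise_cons.mp hs
    have h1' : (1 : ℕ) ∈ b :: t := by
      rcases List.mem_cons.mp h1 with h | h
      · have hb : 0 < b := hp b (by simp)
        have hba : a ≥ b := hs'.1 b (by simp)
        have : b = 1 := by omega
        simp [this]
      · exact h
    have ih := dropLast_append_one (b :: t) hs'.2 (fun x hx => hp x (List.mem_cons_of_mem _ hx)) h1'
    show (a :: (b :: t).dropLast) ++ [1] = a :: b :: t
    rw [List.cons_append, ih]

lemma sum_map_pred : ∀ l : List ℕ, (∀ x ∈ l, 0 < x) → (l.map (· - 1)).sum + l.length = l.sum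
  | [] => by simp
  | a :: t => by
    intro h
    have ih := sum_map_pred t (fun x hx => h x (List.mem_cons_of_mem _ hx))
    have ha := h a (by simp)
    simp only [List.map_cons, List.sum_cons, List.length_cons]
    omega

lemma length_le_sum : ∀ l : List ℕ, (∀ x ∈ l, 0 < x) → l.length ≤ l.sum
  | [] => by simp
  | a :: t => by
    intro h
    have ih := length_le_sum t (fun x hx => h x (List.mem_cons_of_mem _ hx))
    have ha := h a (by simp)
    simp only [List.length_cons, List.sum_cons]
    omega

lemma bp_ne_nil {N j n : ℕ} {l : List ℕ} (h : BP N (j + 1) n l) : l ≠ [] := by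
  rintro rfl
  have := h.2.2.1
  simp at this

def equivB1 (N j n : ℕ) :
    {l : List ℕ // (BP (N + 1) (j + 1) (n + 1) l ∧ 1 ∈ l)} ≃ {l : List ℕ // BP N j n l} where
  toFun x := ⟨x.1.dropLast, by
    obtain ⟨l, ⟨⟨hs, hp⟩, hsum, hlen, hhd⟩, h1⟩ := x
    show BP N j n l.dropLast
    have hl1 := dropLast_append_one l hs hp h1
    have hsum' : l.dropLast.sum + 1 = l.sum := by
      conv_rhs => rw [← hl1]
      simp
    have hlen' : l.dropLast.length + 1 = l.length := by
      conv_rhs => rw [← hl1]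
      simp
    refine ⟨⟨hs.sublist (List.dropLast_sublist l), fun x hx =>
      hp x ((List.dropLast_sublist l).subset hx)⟩, by omega, by omega, ?_⟩
    cases hd : l.dropLast with
    | nil =>
      show ([] : List ℕ).headI + ([] : List ℕ).length ≤ N + 1
      show 0 + 0 ≤ N + 1
      omega
    | cons u v =>
      have hu : l.headI = u := by
        conv_lhs => rw [← hl1, hd]
        simp
      rw [hd] at hlen'
      simp only [List.headI_cons, List.length_cons] at hlen' ⊢
      omega⟩
  invFun y := ⟨y.1 ++ [1], by
    obtain ⟨m, ⟨hs, hp⟩, hsum, hlen, hhd⟩ := y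
    show BP (N + 1) (j + 1) (n + 1) (m ++ [1])
    refine ⟨⟨?_, ?_⟩, by simp; omega, by simp; omega, ?_⟩
    · refine List.pairwise_append.mpr ⟨hs, List.pairwise_singleton _ _, fun a ha b hb => ?_⟩
      simp only [List.mem_singleton] at hb
      subst hb
      exact hp a ha
    · intro x hx
      rcases List.mem_append.mp hx with hx | hx
      · exact hp x hx
      · simp only [List.mem_singleton] at hx; omega
    · cases m with
      | nil =>
        simp
      | cons u v =>
        simp only [List.cons_append, List.headI_cons, List.length_cons, List.length_append,
          List.length_singleton, List.length_nil]
        simp only [List.headI_cons, List.length_cons] at hhd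
        omega, by simp⟩
  left_inv := by
    rintro ⟨l, ⟨⟨hs, hp⟩, _⟩, h1⟩
    exact Subtype.ext (dropLast_append_one l hs hp h1)
  right_inv := by
    rintro ⟨m, hm⟩
    exact Subtype.ext (List.dropLast_concat)

def equivB2 (N j n : ℕ) :
    {l : List ℕ // (BP (N + 1) (j + 1) (n + 1) l ∧ ¬ 1 ∈ l)} ≃
      {l : List ℕ // BP N (j + 1) (n - j) l} where
  toFun x := ⟨x.1.map (· - 1), by
    obtain ⟨l, ⟨⟨hs, hp⟩, hsum, hlen, hhd⟩, h1⟩ := x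
    show BP N (j + 1) (n - j) (l.map (· - 1))
    have h2 : ∀ x ∈ l, 2 ≤ x := by
      intro x hx
      have hx0 := hp x hx
      by_contra hlt
      have hx1 : x = 1 := by omega
      rw [hx1] at hx
      exact h1 hx
    have hsm := sum_map_pred l hp
    refine ⟨⟨?_, ?_⟩, by omega, by simp; omega, ?_⟩
    · exact hs.map _ (fun a b hab => Nat.sub_le_sub_right hab 1)
    · intro x hx
      obtain ⟨y, hy, rfl⟩ := List.mem_map.mp hx
      have := h2 y hy
      omega
    · cases l with
      | nil => simp at hlen
      | cons u v =>
        have := h2 u (by simp)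
        simp only [List.map_cons, List.headI_cons, List.length_map, List.length_cons]
        simp only [List.headI_cons, List.length_cons] at hhd
        omega⟩
  invFun y := ⟨y.1.map (· + 1), by
    obtain ⟨m, ⟨hs, hp⟩, hsum, hlen, hhd⟩ := y
    show BP (N + 1) (j + 1) (n + 1) (m.map (· + 1)) ∧ ¬ 1 ∈ m.map (· + 1)
    have hls := length_le_sum m hp
    have hsm : (m.map (· + 1)).sum = m.sum + m.length := by
      clear hsum hlen hhd hls hs hp
      induction m with
      | nil => simp
      | cons a t ih => simp [ih]; omega
    constructor
    constructor
    · refine ⟨hs.map _ (fun a b hab => by omega), ?_⟩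
      intro x hx
      obtain ⟨y, hy, rfl⟩ := List.mem_map.mp hx
      omega
    · refine ⟨by omega, by simp; omega, ?_⟩
      cases m with
      | nil => simp at hlen
      | cons u v =>
        simp only [List.map_cons, List.headI_cons, List.length_map, List.length_cons]
        simp only [List.headI_cons, List.length_cons] at hhd
        omega
    · intro hmem
      obtain ⟨y, hy, hxy⟩ := List.mem_map.mp hmem
      have := hp y hy
      omega⟩
  left_inv := by
    rintro ⟨l, ⟨⟨hs, hp⟩, hsum, hlen, hhd⟩, h1⟩
    apply Subtype.ext
    show (l.map (· - 1)).map (· + 1) = l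
    rw [List.map_map]
    have : ∀ x ∈ l, x - 1 + 1 = x := fun x hx => by have := hp x hx; omega
    calc l.map ((· + 1) ∘ (· - 1)) = l.map id := List.map_congr_left (fun a ha => this a ha)
    _ = l := List.map_id l
  right_inv := by
    rintro ⟨m, hm⟩
    apply Subtype.ext
    show (m.map (· + 1)).map (· - 1) = m
    rw [List.map_map]
    calc m.map ((· - 1) ∘ (· + 1)) = m.map id := List.map_congr_left (fun a _ => by simp)
    _ = m := List.map_id m

lemma cardB_rec (N j n : ℕ) :
    Nat.card {l : List ℕ // BP (N + 1) (j + 1) (n + 1) l} =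
      Nat.card {l : List ℕ // BP N j n l} +
        Nat.card {l : List ℕ // BP N (j + 1) (n - j) l} := by
  rw [card_split (BP (N + 1) (j + 1) (n + 1)) (fun l => 1 ∈ l),
    Nat.card_congr (equivB1 N j n), Nat.card_congr (equivB2 N j n)]

/-! ### Base cases -/

lemma base_j0 (N n : ℕ) :
    Nat.card {l : List ℕ // AP N 0 n l} = Nat.card {l : List ℕ // BP N 0 n l} := by
  have hA : ∀ l, AP N 0 n l → l = [] ∧ n = 0 := by
    intro l hl
    cases l with
    | nil => exact ⟨rfl, by simpa using hl.2.2.1.symm⟩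
    | cons a L =>
      have := gamma_pos hl.1
      rw [hl.2.2.2] at this
      omega
  have hB : ∀ l, BP N 0 n l → l = [] ∧ n = 0 := by
    intro l hl
    have : l = [] := List.length_eq_zero_iff.mp hl.2.2.1
    subst this
    exact ⟨rfl, by simpa using hl.2.1.symm⟩
  by_cases hn : n = 0
  · subst hn
    rw [card_singleton_subtype [] ⟨sdp_nil, by simp, rfl, rfl⟩ (fun l hl => (hA l hl).1),
      card_singleton_subtype [] ⟨part_nil, rfl, rfl, by simp⟩ (fun l hl => (hB l hl).1)]
  · rw [card_empty_subtype (fun l hl => hn (hA l hl).2),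
      card_empty_subtype (fun l hl => hn (hB l hl).2)]

lemma base_N0 (j n : ℕ) :
    Nat.card {l : List ℕ // AP 0 (j + 1) n l} = Nat.card {l : List ℕ // BP 0 (j + 1) n l} := by
  rw [card_empty_subtype, card_empty_subtype]
  · intro l hl
    have hne := bp_ne_nil hl
    cases l with
    | nil => exact hne rfl
    | cons a L =>
      have ha := hl.1.2 a (by simp)
      have := hl.2.2.2
      simp only [List.headI_cons, List.length_cons, hl.2.2.1] at this
      have hlen := hl.2.2.1
      simp only [List.length_cons] at hlen
      omega
  · intro l hl
    cases l with
    | nil =>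
      have h := hl.2.2.2
      rw [gammaSum_def] at h
      simp at h
    | cons a L =>
      have h0 := hl.1.2 a (by simp)
      have hb := hl.2.1 a (by simp)
      omega

lemma base_n0 (N j : ℕ) :
    Nat.card {l : List ℕ // AP N (j + 1) 0 l} = Nat.card {l : List ℕ // BP N (j + 1) 0 l} := by
  rw [card_empty_subtype, card_empty_subtype]
  · intro l hl
    have hne := bp_ne_nil hl
    cases l with
    | nil => exact hne rfl
    | cons a L =>
      have ha := hl.1.2 a (by simp)
      have hsum := hl.2.1
      simp only [List.sum_cons] at hsum
      omega
  · intro l hl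
    have h1 : gammaSum l = j + 1 := hl.2.2.2
    have h2 : Osum l = 0 := hl.2.2.1
    simp only [gammaSum_def, h2] at h1
    omega

/-! ### The main induction -/

lemma main (N : ℕ) : ∀ j n : ℕ,
    Nat.card {l : List ℕ // AP N j n l} = Nat.card {l : List ℕ // BP N j n l} := by
  induction N with
  | zero =>
    intro j n
    match j with
    | 0 => exact base_j0 0 n
    | j + 1 => exact base_N0 j n
  | succ N ih =>
    intro j n
    match j, n with
    | 0, n => exact base_j0 (N + 1) n
    | j + 1, 0 => exact base_n0 (N + 1) j
    | j + 1, n + 1 => rw [cardA_rec, cardB_rec, ih, ih]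

end RFSH

/-- The number of partitions into distinct parts `≤ N` with `O(π) = n` and `γ(π) = j`
equals the number of partitions of `n` into exactly `j` parts with largest hook length
`≤ N` (i.e. `μ1 + j ≤ N + 1`). -/
theorem refined_finite_schmidt_hook (N j n : ℕ) :
    Nat.card {l : List ℕ //
        IsDistinctPartition l ∧ (∀ x ∈ l, x ≤ N) ∧ Osum l = n ∧ gammaSum l = j} =
      Nat.card {l : List ℕ //
        IsPartition l ∧ l.sum = n ∧ l.length = j ∧ l.headI + l.length ≤ N + 1} := by
  exact RFSH.main N j n
end

section
/- For every nonnegative integer n, the signed count ∑_π (−1)^{E(π)}, taken over all partitions π into distinct parts with O(π) = n (a finite set), equals the number of partitions of n into distinct odd parts. -/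
def invol : List ℕ → List ℕ
  | [] => []
  | [a] => if a = 1 then [1] else [a, 1]
  | [a, b] =>
      if b = 1 then [a]
      else if b + 1 = a ∧ a % 2 = 1 then [a, b]
      else if b % 2 = 0 then [a, b + 1] else [a, b - 1]
  | a :: b :: c :: l =>
      if b + 1 = a ∧ a % 2 = c % 2 then a :: b :: invol (c :: l)
      else if b % 2 = c % 2 then a :: (b - 1) :: c :: l
      else a :: (b + 1) :: c :: l

lemma osum_nil : Osum [] = 0 := rfl
lemma osum_single (a : ℕ) : Osum [a] = a := rfl
lemma osum_cons_cons (a b : ℕ) (l : List ℕ) : Osum (a :: b :: l) = a + Osum l := rfl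
lemma esum_nil : Esum [] = 0 := rfl
lemma esum_single (a : ℕ) : Esum [a] = 0 := rfl
lemma esum_cons_cons (a b : ℕ) (l : List ℕ) : Esum (a :: b :: l) = b + Esum l := by
  cases l with
  | nil => simp [Esum, sumAlt]
  | cons c t => rfl

lemma invol_cons (a : ℕ) (l : List ℕ) : ∃ t, invol (a :: l) = a :: t := by
  match l with
  | [] => unfold invol; split_ifs with h <;> [subst h; skip] <;> exact ⟨_, rfl⟩
  | [b] => unfold invol; split_ifs <;> exact ⟨_, rfl⟩
  | b :: c :: t => unfold invol; split_ifs <;> exact ⟨_, rfl⟩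

lemma dp_cons (a : ℕ) (l : List ℕ) :
    IsDistinctPartition (a :: l) ↔ (∀ x ∈ l, x < a) ∧ 0 < a ∧ IsDistinctPartition l := by
  simp [IsDistinctPartition, List.pairwise_cons]
  tauto

lemma dp_le_head {a : ℕ} {l : List ℕ} (h : IsDistinctPartition (a :: l)) :
    ∀ x ∈ a :: l, x ≤ a := by
  rcases (dp_cons a l).1 h with ⟨h1, _, _⟩
  intro x hx
  rcases hx with _ | hx
  · rfl
  · exact (h1 _ (by assumption)).le

@[simp] lemma dp_nil : IsDistinctPartition [] := ⟨List.Pairwise.nil, by simp⟩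

lemma dp_single (x : ℕ) : IsDistinctPartition [x] ↔ 0 < x := by
  rw [dp_cons]; simp

lemma dp_pair (x y : ℕ) : IsDistinctPartition [x, y] ↔ y < x ∧ 0 < y := by
  rw [dp_cons, dp_single]; constructor
  · rintro ⟨h1, h2, h3⟩; exact ⟨h1 y (by simp), h3⟩
  · rintro ⟨h1, h2⟩; exact ⟨by simpa using h1, by omega, h2⟩

lemma invol_dp_osum : ∀ l : List ℕ, IsDistinctPartition l →
    IsDistinctPartition (invol l) ∧ Osum (invol l) = Osum l := by
  intro l
  induction l using invol.induct with
  | case1 => exact fun h => ⟨h, rfl⟩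
  | case2 => exact fun h => ⟨h, rfl⟩
  | case3 a ha =>
      intro h
      have hpos : 0 < a := (dp_single a).1 h
      have he : invol [a] = [a, 1] := by simp [invol, ha]
      rw [he]
      refine ⟨(dp_pair a 1).2 (by omega), by simp [Osum, sumAlt]⟩
  | case4 a =>
      intro h
      rcases (dp_pair a 1).1 h with ⟨h1, -⟩
      have he : invol [a, 1] = [a] := by simp [invol]
      rw [he]
      exact ⟨(dp_single a).2 (by omega), by simp [Osum, sumAlt]⟩
  | case5 a b hb hfix =>
      intro h
      have he : invol [a, b] = [a, b] := by simp [invol, hb, hfix]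
      rw [he]; exact ⟨h, rfl⟩
  | case6 a b hb hfix hev =>
      intro h
      rcases (dp_pair a b).1 h with ⟨hba, hbp⟩
      have hlt2 : b + 1 < a := by
        rcases Nat.lt_or_ge (b+1) a with h' | h'
        · exact h'
        · exfalso; exact hfix ⟨by omega, by omega⟩
      have he : invol [a, b] = [a, b + 1] := by simp [invol, hb, hfix, hev]
      rw [he]
      exact ⟨(dp_pair a (b+1)).2 (by omega), by simp [Osum, sumAlt]⟩
  | case7 a b hb hfix hev =>
      intro h
      rcases (dp_pair a b).1 h with ⟨hba, hbp⟩
      have hb2 : 2 ≤ b := by omega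
      have he : invol [a, b] = [a, b - 1] := by simp [invol, hb, hfix, hev]
      rw [he]
      exact ⟨(dp_pair a (b-1)).2 (by omega), by simp [Osum, sumAlt]⟩
  | case8 a b c l hcond ih =>
      intro h
      rcases (dp_cons a (b::c::l)).1 h with ⟨hlt, hpa, htl⟩
      rcases (dp_cons b (c::l)).1 htl with ⟨hltb, hpb, htl2⟩
      obtain ⟨t, ht⟩ := invol_cons c l
      rcases ih htl2 with ⟨hdp', hos'⟩
      have hcb : c < b := hltb c (by simp)
      have hba : b < a := hlt b (by simp)
      have hle : ∀ x ∈ invol (c :: l), x ≤ c := by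
        rw [ht] at hdp' ⊢; exact dp_le_head hdp'
      have he : invol (a :: b :: c :: l) = a :: b :: invol (c :: l) := by
        simp [invol, hcond.1, hcond.2]
      rw [he]
      constructor
      · rw [dp_cons]
        refine ⟨?_, hpa, ?_⟩
        · intro x hx
          rcases List.mem_cons.1 hx with h' | h'
          · omega
          · have := hle x h'; omega
        · rw [dp_cons]
          refine ⟨fun x hx => by have := hle x hx; omega, hpb, hdp'⟩
      · rw [ht] at hos' ⊢
        rw [osum_cons_cons, osum_cons_cons, hos']
  | case9 a b c l hcond hpar =>
      intro h
      rcases (dp_cons a (b::c::l)).1 h with ⟨hlt, hpa, htl⟩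
      rcases (dp_cons b (c::l)).1 htl with ⟨hltb, hpb, htl2⟩
      rcases (dp_cons c l).1 htl2 with ⟨hltc, hpc, htl3⟩
      have hcb : c < b := hltb c (by simp)
      have hba : b < a := hlt b (by simp)
      have hb2 : c + 2 ≤ b := by omega
      have he : invol (a :: b :: c :: l) = a :: (b-1) :: c :: l := by
        simp [invol, hcond, hpar]
      rw [he]
      constructor
      · rw [dp_cons]
        refine ⟨?_, hpa, ?_⟩
        · intro x hx
          rcases List.mem_cons.1 hx with h' | hx
          · omega
          · exact hlt x (by simpa using Or.inr (by simpa using hx))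
        · rw [dp_cons]
          refine ⟨?_, by omega, htl2⟩
          intro x hx
          rcases List.mem_cons.1 hx with h' | hx
          · omega
          · have := hltc x hx; omega
      · simp [osum_cons_cons]
  | case10 a b c l hcond hpar =>
      intro h
      rcases (dp_cons a (b::c::l)).1 h with ⟨hlt, hpa, htl⟩
      rcases (dp_cons b (c::l)).1 htl with ⟨hltb, hpb, htl2⟩
      rcases (dp_cons c l).1 htl2 with ⟨hltc, hpc, htl3⟩
      have hcb : c < b := hltb c (by simp)
      have hba : b < a := hlt b (by simp)
      have hb1a : b + 1 < a := by
        rcases Nat.lt_or_ge (b+1) a with h' | h'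
        · exact h'
        · exfalso; exact hcond ⟨by omega, by omega⟩
      have he : invol (a :: b :: c :: l) = a :: (b+1) :: c :: l := by
        simp [invol, hcond, hpar]
      rw [he]
      constructor
      · rw [dp_cons]
        refine ⟨?_, hpa, ?_⟩
        · intro x hx
          rcases List.mem_cons.1 hx with h' | hx
          · omega
          · exact hlt x (by simpa using Or.inr (by simpa using hx))
        · rw [dp_cons]
          refine ⟨?_, by omega, htl2⟩
          intro x hx
          rcases List.mem_cons.1 hx with h' | hx
          · omega
          · have := hltc x hx; omega
      · simp [osum_cons_cons]

lemma invol_invol : ∀ l : List ℕ, IsDistinctPartition l → invol (invol l) = l := by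
  intro l
  induction l using invol.induct with
  | case1 => intro _; rfl
  | case2 => intro _; rfl
  | case3 a ha =>
      intro h
      have he : invol [a] = [a, 1] := by simp [invol, ha]
      rw [he]; simp [invol]
  | case4 a =>
      intro h
      rcases (dp_pair a 1).1 h with ⟨h1, -⟩
      have ha : ¬ a = 1 := by omega
      have he : invol [a, 1] = [a] := by simp [invol]
      rw [he]; simp [invol, ha]
  | case5 a b hb hfix =>
      intro h
      have he : invol [a, b] = [a, b] := by simp [invol, hb, hfix]
      rw [he, he]
  | case6 a b hb hfix hev =>
      intro h
      rcases (dp_pair a b).1 h with ⟨hba, hbp⟩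
      have he : invol [a, b] = [a, b + 1] := by simp [invol, hb, hfix, hev]
      rw [he]
      have h1 : ¬ b + 1 = 1 := by omega
      have h2 : ¬ (b + 1 + 1 = a ∧ a % 2 = 1) := by
        rintro ⟨h2, h3⟩; omega
      have h3 : ¬ (b + 1) % 2 = 0 := by omega
      simp [invol, h1, h2, h3]
      omega
  | case7 a b hb hfix hev =>
      intro h
      rcases (dp_pair a b).1 h with ⟨hba, hbp⟩
      have hb3 : 3 ≤ b := by omega
      have he : invol [a, b] = [a, b - 1] := by simp [invol, hb, hfix, hev]
      rw [he]
      have h1 : ¬ b - 1 = 1 := by omega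
      have h2 : ¬ (b - 1 + 1 = a ∧ a % 2 = 1) := by
        rintro ⟨h2, h3⟩; omega
      have h3 : (b - 1) % 2 = 0 := by omega
      have he2 : invol [a, b - 1] = [a, b - 1 + 1] := by simp [invol, h1, h2, h3]
      have hbb : b - 1 + 1 = b := by omega
      rw [he2, hbb]
  | case8 a b c l hcond ih =>
      intro h
      rcases (dp_cons a (b::c::l)).1 h with ⟨hlt, hpa, htl⟩
      rcases (dp_cons b (c::l)).1 htl with ⟨hltb, hpb, htl2⟩
      obtain ⟨t, ht⟩ := invol_cons c l
      have he : invol (a :: b :: c :: l) = a :: b :: invol (c :: l) := by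
        simp [invol, hcond.1, hcond.2]
      rw [he, ht]
      have he2 : invol (a :: b :: c :: t) = a :: b :: invol (c :: t) := by
        simp [invol, hcond.1, hcond.2]
      rw [he2, ← ht, ih htl2]
  | case9 a b c l hcond hpar =>
      intro h
      rcases (dp_cons a (b::c::l)).1 h with ⟨hlt, hpa, htl⟩
      rcases (dp_cons b (c::l)).1 htl with ⟨hltb, hpb, htl2⟩
      rcases (dp_cons c l).1 htl2 with ⟨hltc, hpc, htl3⟩
      have hcb : c < b := hltb c (by simp)
      have hba : b < a := hlt b (by simp)
      have hb2 : c + 2 ≤ b := by omega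
      have he : invol (a :: b :: c :: l) = a :: (b-1) :: c :: l := by
        simp [invol, hcond, hpar]
      rw [he]
      have h2 : ¬ (b - 1 + 1 = a ∧ a % 2 = c % 2) := by
        rintro ⟨h2, h3⟩; omega
      have h3 : ¬ (b - 1) % 2 = c % 2 := by omega
      have he2 : invol (a :: (b-1) :: c :: l) = a :: (b-1+1) :: c :: l := by
        simp [invol, h2, h3]
      have hbb : b - 1 + 1 = b := by omega
      rw [he2, hbb]
  | case10 a b c l hcond hpar =>
      intro h
      rcases (dp_cons a (b::c::l)).1 h with ⟨hlt, hpa, htl⟩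
      rcases (dp_cons b (c::l)).1 htl with ⟨hltb, hpb, htl2⟩
      rcases (dp_cons c l).1 htl2 with ⟨hltc, hpc, htl3⟩
      have hcb : c < b := hltb c (by simp)
      have hba : b < a := hlt b (by simp)
      have he : invol (a :: b :: c :: l) = a :: (b+1) :: c :: l := by
        simp [invol, hcond, hpar]
      rw [he]
      have h2 : ¬ (b + 1 + 1 = a ∧ a % 2 = c % 2) := by
        rintro ⟨h2, h3⟩; omega
      have h3 : (b + 1) % 2 = c % 2 := by omega
      have he2 : invol (a :: (b+1) :: c :: l) = a :: (b+1-1) :: c :: l := by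
        simp [invol, h2, h3]
      have hbb : b + 1 - 1 = b := by omega
      rw [he2, hbb]

lemma invol_sign : ∀ l : List ℕ, IsDistinctPartition l →
    invol l = l ∨ (Esum (invol l) + Esum l) % 2 = 1 := by
  intro l
  induction l using invol.induct with
  | case1 => exact fun _ => Or.inl rfl
  | case2 => exact fun _ => Or.inl rfl
  | case3 a ha =>
      intro h
      right
      have he : invol [a] = [a, 1] := by simp [invol, ha]
      rw [he, esum_cons_cons, esum_nil, esum_single]
  | case4 a =>
      intro h
      right
      have he : invol [a, 1] = [a] := by simp [invol]
      rw [he, esum_cons_cons, esum_nil, esum_single]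
  | case5 a b hb hfix =>
      intro h
      left
      simp [invol, hb, hfix]
  | case6 a b hb hfix hev =>
      intro h
      right
      have he : invol [a, b] = [a, b + 1] := by simp [invol, hb, hfix, hev]
      rw [he, esum_cons_cons, esum_cons_cons, esum_nil]
      omega
  | case7 a b hb hfix hev =>
      intro h
      right
      have he : invol [a, b] = [a, b - 1] := by simp [invol, hb, hfix, hev]
      rw [he, esum_cons_cons, esum_cons_cons, esum_nil]
      omega
  | case8 a b c l hcond ih =>
      intro h
      rcases (dp_cons a (b::c::l)).1 h with ⟨hlt, hpa, htl⟩
      rcases (dp_cons b (c::l)).1 htl with ⟨hltb, hpb, htl2⟩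
      have he : invol (a :: b :: c :: l) = a :: b :: invol (c :: l) := by
        simp [invol, hcond.1, hcond.2]
      rcases ih htl2 with hfix' | hpar'
      · left; rw [he, hfix']
      · right
        rw [he, esum_cons_cons, esum_cons_cons]
        omega
  | case9 a b c l hcond hpar =>
      intro h
      rcases (dp_cons a (b::c::l)).1 h with ⟨hlt, hpa, htl⟩
      rcases (dp_cons b (c::l)).1 htl with ⟨hltb, hpb, htl2⟩
      rcases (dp_cons c l).1 htl2 with ⟨hltc, hpc, htl3⟩
      have hcb : c < b := hltb c (by simp)
      right
      have he : invol (a :: b :: c :: l) = a :: (b-1) :: c :: l := by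
        simp [invol, hcond, hpar]
      rw [he, esum_cons_cons, esum_cons_cons]
      omega
  | case10 a b c l hcond hpar =>
      intro h
      right
      have he : invol (a :: b :: c :: l) = a :: (b+1) :: c :: l := by
        simp [invol, hcond, hpar]
      rw [he, esum_cons_cons, esum_cons_cons]
      omega

def evens : List ℕ → List ℕ
  | [] => []
  | [a] => [a]
  | a :: _ :: l => a :: evens l

def interleave : List ℕ → List ℕ
  | [] => []
  | [a] => if a = 1 then [1] else [a, a - 1]
  | a :: b :: l => a :: (a - 1) :: interleave (b :: l)

lemma evens_sublist : ∀ l : List ℕ, List.Sublist (evens l) l := by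
  intro l
  induction l using evens.induct with
  | case1 => simp [evens]
  | case2 a => simp [evens]
  | case3 a b l ih =>
      show List.Sublist (a :: evens l) (a :: b :: l)
      exact (ih.cons b).cons₂ a

lemma sum_evens : ∀ l : List ℕ, (evens l).sum = Osum l := by
  intro l
  induction l using evens.induct with
  | case1 => rfl
  | case2 a => simp [evens, Osum, sumAlt]
  | case3 a b l ih =>
      show (a :: evens l).sum = Osum (a :: b :: l)
      rw [List.sum_cons, osum_cons_cons, ih]

lemma interleave_cons (a : ℕ) (l : List ℕ) : ∃ t, interleave (a :: l) = a :: t := by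
  match l with
  | [] =>
      unfold interleave
      split_ifs with h
      · subst h; exact ⟨_, rfl⟩
      · exact ⟨_, rfl⟩
  | b :: t => exact ⟨_, rfl⟩

lemma fixed_struct : ∀ l : List ℕ, IsDistinctPartition l → invol l = l →
    Esum l % 2 = 0 ∧ (∀ x ∈ evens l, x % 2 = 1) ∧ interleave (evens l) = l := by
  intro l
  induction l using invol.induct with
  | case1 => intro _ _; exact ⟨rfl, by simp [evens], rfl⟩
  | case2 =>
      intro _ _
      refine ⟨rfl, ?_, rfl⟩
      intro x hx; simp [evens] at hx; omega
  | case3 a ha =>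
      intro h hfx
      exfalso
      have he : invol [a] = [a, 1] := by simp [invol, ha]
      rw [he] at hfx
      simp at hfx
  | case4 a =>
      intro h hfx
      exfalso
      have he : invol [a, 1] = [a] := by simp [invol]
      rw [he] at hfx
      simp at hfx
  | case5 a b hb hfix =>
      intro h hfx
      rcases (dp_pair a b).1 h with ⟨hba, hbp⟩
      refine ⟨?_, ?_, ?_⟩
      · rw [esum_cons_cons, esum_nil]; omega
      · intro x hx
        simp [evens] at hx
        subst hx
        omega
      · show interleave [a] = [a, b]
        have ha1 : ¬ a = 1 := by omega
        simp [interleave, ha1]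
        omega
  | case6 a b hb hfix hev =>
      intro h hfx
      exfalso
      have he : invol [a, b] = [a, b + 1] := by simp [invol, hb, hfix, hev]
      rw [he] at hfx
      simp at hfx
  | case7 a b hb hfix hev =>
      intro h hfx
      exfalso
      rcases (dp_pair a b).1 h with ⟨hba, hbp⟩
      have he : invol [a, b] = [a, b - 1] := by simp [invol, hb, hfix, hev]
      rw [he] at hfx
      simp at hfx
      omega
  | case8 a b c l hcond ih =>
      intro h hfx
      rcases (dp_cons a (b::c::l)).1 h with ⟨hlt, hpa, htl⟩
      rcases (dp_cons b (c::l)).1 htl with ⟨hltb, hpb, htl2⟩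
      have he : invol (a :: b :: c :: l) = a :: b :: invol (c :: l) := by
        simp [invol, hcond.1, hcond.2]
      rw [he] at hfx
      have hfx2 : invol (c :: l) = c :: l := by
        simpa using hfx
      rcases ih htl2 hfx2 with ⟨hE, hodd, hint⟩
      have hc_odd : c % 2 = 1 := by
        apply hodd c
        obtain ⟨t, ht⟩ := invol_cons c l  -- dummy
        cases l with
        | nil => simp [evens]
        | cons d t' => simp [evens]
      have ha_odd : a % 2 = 1 := by omega
      refine ⟨?_, ?_, ?_⟩
      · rw [esum_cons_cons]
        omega
      · intro x hx
        have : evens (a :: b :: c :: l) = a :: evens (c :: l) := rfl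
        rw [this] at hx
        rcases List.mem_cons.1 hx with h' | h'
        · omega
        · exact hodd x h'
      · have h1 : evens (a :: b :: c :: l) = a :: evens (c :: l) := rfl
        rw [h1]
        obtain ⟨t, ht⟩ : ∃ t, evens (c :: l) = c :: t := by
          cases l with
          | nil => exact ⟨[], rfl⟩
          | cons d t' => exact ⟨evens t', rfl⟩
        rw [ht]
        show a :: (a - 1) :: interleave (c :: t) = a :: b :: c :: l
        rw [← ht, hint]
        have : a - 1 = b := by omega
        rw [this]
  | case9 a b c l hcond hpar =>
      intro h hfx
      exfalso
      rcases (dp_cons a (b::c::l)).1 h with ⟨hlt, hpa, htl⟩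
      rcases (dp_cons b (c::l)).1 htl with ⟨hltb, hpb, htl2⟩
      have hcb : c < b := hltb c (by simp)
      have he : invol (a :: b :: c :: l) = a :: (b-1) :: c :: l := by
        simp [invol, hcond, hpar]
      rw [he] at hfx
      simp at hfx
      omega
  | case10 a b c l hcond hpar =>
      intro h hfx
      exfalso
      have he : invol (a :: b :: c :: l) = a :: (b+1) :: c :: l := by
        simp [invol, hcond, hpar]
      rw [he] at hfx
      simp at hfx

lemma dp_evens {l : List ℕ} (h : IsDistinctPartition l) : IsDistinctPartition (evens l) := by
  rcases h with ⟨hs, hp⟩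
  exact ⟨hs.sublist (evens_sublist l), fun x hx => hp x ((evens_sublist l).mem hx)⟩

lemma interleave_fixed : ∀ l : List ℕ, IsDistinctPartition l → (∀ x ∈ l, x % 2 = 1) →
    IsDistinctPartition (interleave l) ∧ Osum (interleave l) = l.sum ∧
      invol (interleave l) = interleave l ∧ evens (interleave l) = l := by
  intro l
  induction l using interleave.induct with
  | case1 => exact fun _ _ => ⟨dp_nil, rfl, rfl, rfl⟩
  | case2 =>
      intro h hodd
      have he : interleave [1] = [1] := by simp [interleave]
      rw [he]
      exact ⟨h, rfl, rfl, rfl⟩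
  | case3 a ha =>
      intro h hodd
      have hpa : 0 < a := (dp_single a).1 h
      have haodd : a % 2 = 1 := hodd a (by simp)
      have ha3 : 3 ≤ a := by omega
      have he : interleave [a] = [a, a - 1] := by simp [interleave, ha]
      rw [he]
      refine ⟨(dp_pair a (a-1)).2 (by omega), ?_, ?_, ?_⟩
      · simp [Osum, sumAlt]
      · have h1 : ¬ a - 1 = 1 := by omega
        have h2 : a - 1 + 1 = a ∧ a % 2 = 1 := ⟨by omega, haodd⟩
        simp [invol, h1, h2]
      · rfl
  | case4 a b l ih =>
      intro h hodd
      rcases (dp_cons a (b::l)).1 h with ⟨hlt, hpa, htl⟩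
      have hba : b < a := hlt b (by simp)
      have haodd : a % 2 = 1 := hodd a (by simp)
      have hbodd : b % 2 = 1 := hodd b (by simp)
      have hpb : 0 < b := htl.2 b (by simp)
      have hab2 : b + 2 ≤ a := by omega
      rcases ih htl (fun x hx => hodd x (by simp [hx])) with ⟨hdp', hos', hfx', hev'⟩
      obtain ⟨t, ht⟩ := interleave_cons b l
      have he : interleave (a :: b :: l) = a :: (a - 1) :: interleave (b :: l) := rfl
      rw [he]
      have hle : ∀ x ∈ interleave (b :: l), x ≤ b := by
        rw [ht] at hdp' ⊢; exact dp_le_head hdp'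
      refine ⟨?_, ?_, ?_, ?_⟩
      · rw [dp_cons]
        refine ⟨?_, hpa, ?_⟩
        · intro x hx
          rcases List.mem_cons.1 hx with h' | h'
          · omega
          · have := hle x h'; omega
        · rw [dp_cons]
          exact ⟨fun x hx => by have := hle x hx; omega, by omega, hdp'⟩
      · rw [osum_cons_cons, hos']; simp
      · rw [ht]
        have hcond : a - 1 + 1 = a ∧ a % 2 = b % 2 := ⟨by omega, by omega⟩
        have he2 : invol (a :: (a-1) :: b :: t) = a :: (a-1) :: invol (b :: t) := by
          simp [invol, hcond.1, hcond.2]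
        rw [he2, ← ht, hfx']
      · rw [ht]
        show a :: evens (b :: t) = a :: b :: l
        rw [← ht, hev']

lemma mem_le_osum : ∀ l : List ℕ, IsDistinctPartition l → ∀ x ∈ l, x ≤ Osum l := by
  intro l hl x hx
  cases l with
  | nil => simp at hx
  | cons a t =>
      have h1 : x ≤ a := dp_le_head hl x hx
      have h2 : a ≤ Osum (a :: t) := by
        cases t with
        | nil => simp [Osum, sumAlt]
        | cons b t' => rw [osum_cons_cons]; omega
      omega

lemma S_finite (n : ℕ) : {l : List ℕ | IsDistinctPartition l ∧ Osum l = n}.Finite := by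
  classical
  haveI : IsAntisymm ℕ (· > ·) := ⟨fun a b h1 h2 => (lt_asymm h1 h2).elim⟩
  apply Set.Finite.of_finite_image (f := List.toFinset)
  · apply Set.Finite.subset (Finset.finite_toSet ((Finset.range (n+1)).powerset))
    rintro t ⟨l, ⟨hdp, hos⟩, rfl⟩
    simp only [Finset.coe_powerset, Set.mem_preimage, Set.mem_powerset_iff, Finset.coe_range]
    intro x hx
    simp only [Finset.coe_range, Set.mem_Iio]
    have : x ∈ l := by simpa using hx
    have := mem_le_osum l hdp x this
    omega
  · rintro l1 ⟨hdp1, -⟩ l2 ⟨hdp2, -⟩ heq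
    have hnd1 : l1.Nodup := hdp1.1.nodup
    have hnd2 : l2.Nodup := hdp2.1.nodup
    exact List.Perm.eq_of_pairwise (fun _ _ _ _ h1 h2 => (lt_asymm h1 h2).elim) hdp1.1 hdp2.1
      (List.perm_of_nodup_nodup_toFinset_eq hnd1 hnd2 heq)

lemma negpow_add {a b : ℕ} (h : (a + b) % 2 = 1) : ((-1 : ℤ)) ^ a + (-1) ^ b = 0 := by
  rcases Nat.even_or_odd a with ha | ha
  · have hb : Odd b := by rw [Nat.odd_iff]; rw [Nat.even_iff] at ha; omega
    rw [ha.neg_one_pow, hb.neg_one_pow]; ring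
  · have hb : Even b := by rw [Nat.even_iff]; rw [Nat.odd_iff] at ha; omega
    rw [ha.neg_one_pow, hb.neg_one_pow]; ring

/-- The signed count `∑ (−1)^{E(π)}` over partitions into distinct parts with `O(π) = n`
equals the number of partitions of `n` into distinct odd parts. -/
theorem signed_distinct_odd_count (n : ℕ) :
    (∑ᶠ l ∈ {l : List ℕ | IsDistinctPartition l ∧ Osum l = n}, ((-1 : ℤ)) ^ Esum l)
    = (Nat.card {l : List ℕ // IsDistinctPartition l ∧ l.sum = n ∧ ∀ x ∈ l, Odd x} : ℤ) := by
    classical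
  have hfin := S_finite n
  rw [finsum_mem_eq_finite_toFinset_sum _ hfin]
  set s := hfin.toFinset with hs
  have hmem : ∀ l : List ℕ, l ∈ s ↔ IsDistinctPartition l ∧ Osum l = n := by
    intro l; simp [hs]
  rw [← Finset.sum_filter_add_sum_filter_not s (fun l => invol l = l)]
  have h2 : ∑ l ∈ s.filter (fun l => ¬ invol l = l), ((-1:ℤ))^Esum l = 0 := by
    apply Finset.sum_involution (g := fun l _ => invol l)
    · intro l hl
      simp only [Finset.mem_filter] at hl
      rcases (hmem l).1 hl.1 with ⟨hdp, -⟩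
      rcases invol_sign l hdp with hfx | hpar
      · exact absurd hfx hl.2
      · exact negpow_add (by omega)
    · intro l hl _
      simp only [Finset.mem_filter] at hl
      exact hl.2
    · intro l hl
      simp only [Finset.mem_filter] at hl ⊢
      rcases (hmem l).1 hl.1 with ⟨hdp, hos⟩
      rcases invol_dp_osum l hdp with ⟨hdp', hos'⟩
      refine ⟨(hmem _).2 ⟨hdp', by omega⟩, ?_⟩
      intro hcontra
      apply hl.2
      have := invol_invol l hdp
      rw [hcontra] at this
      exact this
    · intro l hl
      simp only [Finset.mem_filter] at hl
      rcases (hmem l).1 hl.1 with ⟨hdp, -⟩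
      exact invol_invol l hdp
  rw [h2, add_zero]
  have h1 : ∑ l ∈ s.filter (fun l => invol l = l), ((-1:ℤ))^Esum l
      = (s.filter (fun l => invol l = l)).card := by
    rw [Finset.card_eq_sum_ones, Nat.cast_sum]
    apply Finset.sum_congr rfl
    intro l hl
    simp only [Finset.mem_filter] at hl
    rcases (hmem l).1 hl.1 with ⟨hdp, -⟩
    rcases fixed_struct l hdp hl.2 with ⟨hE, -, -⟩
    have : Even (Esum l) := by rw [Nat.even_iff]; exact hE
    rw [this.neg_one_pow]
    simp
  rw [h1]
  congr 1
  have hcard : Nat.card {l : List ℕ // IsDistinctPartition l ∧ l.sum = n ∧ ∀ x ∈ l, Odd x}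
      = (s.filter (fun l => invol l = l)).card := by
    rw [← Nat.card_eq_finsetCard]
    apply Nat.card_congr
    refine
      { toFun := fun p => ⟨interleave p.1, ?_⟩
        invFun := fun p => ⟨evens p.1, ?_⟩
        left_inv := ?_
        right_inv := ?_ }
    · rcases p with ⟨m, hdp, hsum, hodd⟩
      have hodd' : ∀ x ∈ m, x % 2 = 1 := fun x hx => Nat.odd_iff.1 (hodd x hx)
      rcases interleave_fixed m hdp hodd' with ⟨hdp', hos', hfx', -⟩
      simp only [Finset.mem_filter]
      exact ⟨(hmem _).2 ⟨hdp', by omega⟩, hfx'⟩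
    · rcases p with ⟨l, hl⟩
      simp only [Finset.mem_filter] at hl
      rcases (hmem l).1 hl.1 with ⟨hdp, hos⟩
      rcases fixed_struct l hdp hl.2 with ⟨-, hodd, -⟩
      refine ⟨dp_evens hdp, ?_, fun x hx => Nat.odd_iff.2 (hodd x hx)⟩
      rw [sum_evens]; exact hos
    · rintro ⟨m, hdp, hsum, hodd⟩
      apply Subtype.ext
      have hodd' : ∀ x ∈ m, x % 2 = 1 := fun x hx => Nat.odd_iff.1 (hodd x hx)
      rcases interleave_fixed m hdp hodd' with ⟨-, -, -, hev⟩
      exact hev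
    · rintro ⟨l, hl⟩
      apply Subtype.ext
      simp only [Finset.mem_filter] at hl
      rcases (hmem l).1 hl.1 with ⟨hdp, -⟩
      rcases fixed_struct l hdp hl.2 with ⟨-, -, hint⟩
      exact hint
  rw [hcard]
end

section
/- For every nonnegative integer n, the signed count ∑_π (−1)^{E(π)}, taken over all partitions π with O(π) = n (a finite set, since all parts are ≤ n and there are at most 2n + 1 parts), equals the number of partitions of n into even parts. -/
namespace SPEC

lemma sumAlt_nil (f : ℕ → ℕ) : sumAlt f [] = 0 := rfl
lemma sumAlt_single (f : ℕ → ℕ) (a : ℕ) : sumAlt f [a] = f a := rfl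
lemma sumAlt_cons_cons (f : ℕ → ℕ) (a b : ℕ) (l : List ℕ) :
    sumAlt f (a :: b :: l) = f a + sumAlt f l := rfl

/-- two-step induction principle for lists -/
lemma sumAlt_zero {f : ℕ → ℕ} (hf : f 0 = 0) :
    ∀ l : List ℕ, (∀ x ∈ l, x = 0) → sumAlt f l = 0
  | [], _ => rfl
  | [a], h => by simp [sumAlt_single, h a (by simp), hf]
  | a :: b :: l, h => by
    rw [sumAlt_cons_cons, h a (by simp), hf, sumAlt_zero hf l (fun x hx => h x (by simp [hx]))]

lemma all_zero_of_sorted_head_zero {l : List ℕ} (hs : (0 :: l).Pairwise (· ≥ ·)) :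
    ∀ x ∈ (0 : ℕ) :: l, x = 0 := by
  intro x hx
  rcases hx with _ | hx
  · rfl
  · exact Nat.le_zero.mp (List.rel_of_pairwise_cons hs (a' := x) (by assumption))

lemma sumAlt_filter {f : ℕ → ℕ} (hf : f 0 = 0) :
    ∀ l : List ℕ, l.Pairwise (· ≥ ·) → sumAlt f (l.filter (· ≠ 0)) = sumAlt f l
  | [], _ => rfl
  | [a], h => by
    by_cases ha : a = 0 <;> simp [ha, sumAlt_single, sumAlt_nil, hf, List.filter]
  | a :: b :: l, h => by
    by_cases ha : a = 0
    · subst ha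
      rw [sumAlt_zero hf _ (all_zero_of_sorted_head_zero h)]
      have : ∀ x ∈ (0:ℕ) :: b :: l, x = 0 := all_zero_of_sorted_head_zero h
      have : (((0:ℕ) :: b :: l).filter (· ≠ 0)) = [] := by
        rw [List.filter_eq_nil_iff]
        intro x hx
        simp [this x hx]
      rw [this, sumAlt_nil]
    · by_cases hb : b = 0
      · subst hb
        have hall : ∀ x ∈ l, x = 0 := by
          intro x hx
          have h' : ((0:ℕ) :: l).Pairwise (· ≥ ·) := (List.pairwise_cons.mp h).2
          exact Nat.le_zero.mp (List.rel_of_pairwise_cons h' (a' := x) hx)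
        have hfl : ((a :: (0:ℕ) :: l).filter (· ≠ 0)) = [a] := by
          have : l.filter (fun x => decide (x ≠ 0)) = [] := by
            rw [List.filter_eq_nil_iff]; intro x hx; simp [hall x hx]
          simp [List.filter_cons, ha, this]
          exact hall
        rw [hfl, sumAlt_single, sumAlt_cons_cons, sumAlt_zero hf l hall]
        omega
      · have hs' : l.Pairwise (· ≥ ·) := ((List.pairwise_cons.mp (List.pairwise_cons.mp h).2).2)
        have : ((a :: b :: l).filter (· ≠ 0)) = a :: b :: l.filter (· ≠ 0) := by
          simp [List.filter_cons, ha, hb]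
        rw [this, sumAlt_cons_cons, sumAlt_cons_cons, sumAlt_filter hf l hs']


/-- remove one from every part, dropping parts that become zero. -/
def peel (l : List ℕ) : List ℕ := (l.map (· - 1)).filter (· ≠ 0)

lemma peel_nil : peel [] = [] := rfl

lemma peel_sum_add_length_le : ∀ l : List ℕ, (peel l).sum + (peel l).length ≤ l.sum
  | [] => le_refl 0
  | a :: l => by
    have ih := peel_sum_add_length_le l
    by_cases ha : a - 1 = 0
    · have : peel (a :: l) = peel l := by simp [peel, List.filter_cons, ha]
      rw [this]; exact le_trans ih (Nat.le_add_left _ _)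
    · have : peel (a :: l) = (a - 1) :: peel l := by simp [peel, List.filter_cons, ha]
      rw [this]; simp only [List.sum_cons, List.length_cons]
      omega

/-- the conjugate partition -/
def conj (l : List ℕ) : List ℕ :=
  if h : l = [] then [] else l.length :: conj (peel l)
termination_by l.sum + l.length
decreasing_by
  have := peel_sum_add_length_le l
  have : 0 < l.length := List.length_pos_iff.mpr h
  omega

lemma conj_nil : conj [] = [] := by rw [conj]; rfl

lemma conj_of_ne_nil {l : List ℕ} (h : l ≠ []) : conj l = l.length :: conj (peel l) := by
  rw [conj]; simp [h]

lemma peel_sorted {l : List ℕ} (hs : l.Pairwise (· ≥ ·)) : (peel l).Pairwise (· ≥ ·) := by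
  apply List.Pairwise.filter
  exact List.Pairwise.map _ (fun {a b} hab => Nat.sub_le_sub_right hab 1) hs

lemma peel_pos {l : List ℕ} : ∀ x ∈ peel l, 0 < x := by
  intro x hx
  have := List.of_mem_filter hx
  simpa [Nat.pos_iff_ne_zero] using this

lemma peel_isPartition {l : List ℕ} (h : IsPartition l) : IsPartition (peel l) :=
  ⟨peel_sorted h.1, peel_pos⟩

lemma peel_length_le (l : List ℕ) : (peel l).length ≤ l.length :=
  le_trans (List.length_filter_le _ _) (by simp)


lemma conj_ind {P : List ℕ → Prop} (h1 : P []) (h2 : ∀ l, l ≠ [] → P (peel l) → P l)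
    (l : List ℕ) : P l := by
  suffices H : ∀ N l, l.sum + l.length ≤ N → P l from H _ l le_rfl
  intro N
  induction N using Nat.strong_induction_on with
  | _ N ih =>
    intro l hl
    rcases eq_or_ne l [] with rfl | h
    · exact h1
    · have hp := peel_sum_add_length_le l
      have hlen := List.length_pos_iff.mpr h
      exact h2 l h (ih (N - 1) (by omega) _ (by omega))

lemma conj_mem {l : List ℕ} : ∀ x ∈ conj l, 0 < x ∧ x ≤ l.length := by
  induction l using conj_ind with
  | h1 => simp [conj_nil]
  | h2 l hl ih =>
    rw [conj_of_ne_nil hl]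
    intro x hx
    rcases hx with _ | hx
    · exact ⟨List.length_pos_iff.mpr hl, le_refl _⟩
    · have := ih x (by assumption)
      exact ⟨this.1, le_trans this.2 (le_trans (peel_length_le l) (le_refl _))⟩

lemma conj_sorted (l : List ℕ) : (conj l).Pairwise (· ≥ ·) := by
  induction l using conj_ind with
  | h1 => simp [conj_nil]
  | h2 l hl ih =>
    rw [conj_of_ne_nil hl]
    rw [List.pairwise_cons]
    refine ⟨fun x hx => ?_, ih⟩
    exact le_trans (conj_mem x hx).2 (peel_length_le l)

lemma conj_isPartition (l : List ℕ) : IsPartition (conj l) :=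
  ⟨conj_sorted l, fun x hx => (conj_mem x hx).1⟩

lemma sumAlt_map_pred : ∀ l : List ℕ, (∀ x ∈ l, 0 < x) →
    sumAlt id l = (l.length + 1)/2 + sumAlt id (l.map (· - 1))
  | [], _ => rfl
  | [a], h => by
    have := h a (by simp)
    simp only [sumAlt_single, List.map_cons, List.map_nil, List.length_cons, List.length_nil, id]
    omega
  | a :: b :: l, h => by
    have ih := sumAlt_map_pred l (fun x hx => h x (by simp [hx]))
    have ha := h a (by simp)
    simp only [sumAlt_cons_cons, List.map_cons, List.length_cons, id] at *
    omega

lemma Osum_peel {l : List ℕ} (h : IsPartition l) :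
    Osum l = (l.length + 1)/2 + Osum (peel l) := by
  have hm : (l.map (· - 1)).Pairwise (· ≥ ·) :=
    List.Pairwise.map _ (fun {a b} hab => Nat.sub_le_sub_right hab 1) h.1
  have : Osum (peel l) = sumAlt id (l.map (· - 1)) := sumAlt_filter rfl _ hm
  rw [Osum, sumAlt_map_pred l h.2, this]

lemma tail_isPartition {l : List ℕ} (h : IsPartition l) : IsPartition l.tail := by
  rcases l with _ | ⟨a, m⟩
  · exact h
  · exact ⟨(List.pairwise_cons.mp h.1).2, fun x hx => h.2 x (List.mem_cons_of_mem a (by simpa using hx))⟩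

lemma peel_tail {l : List ℕ} (h : IsPartition l) : peel (l.tail) = (peel l).tail := by
  rcases l with _ | ⟨a, m⟩
  · rfl
  · by_cases ha : a - 1 = 0
    · have hpeel : peel (a :: m) = peel m := by simp [peel, List.filter_cons, ha]
      have ha1 : a = 1 := by have := h.2 a (by simp); omega
      have hallm : ∀ x ∈ m, x = 1 := by
        intro x hx
        have h1 := List.rel_of_pairwise_cons h.1 (a' := x) hx
        have h2 := h.2 x (by simp [hx])
        subst ha1; omega
      have hm : peel m = [] := by
        rw [peel, List.filter_eq_nil_iff]
        intro x hx
        rcases List.mem_map.mp hx with ⟨y, hy, rfl⟩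
        simp [hallm y hy]
      simp [hpeel, hm]
    · have hpeel : peel (a :: m) = (a - 1) :: peel m := by simp [peel, List.filter_cons, ha]
      simp [hpeel]

lemma Esum_peel {l : List ℕ} (h : IsPartition l) :
    Esum l = l.length/2 + Esum (peel l) := by
  rcases l with _ | ⟨a, m⟩
  · simp [Esum, peel_nil]
  · have htail : IsPartition m := tail_isPartition h
    have := Osum_peel htail
    have hpt : peel m = (peel (a :: m)).tail := peel_tail h
    rw [Esum, Esum, List.tail_cons, ← hpt]
    show Osum m = (a :: m).length / 2 + Osum (peel m)
    rw [this]
    simp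

lemma conj_map_sum_O {l : List ℕ} (h : IsPartition l) :
    ((conj l).map (fun c => (c + 1)/2)).sum = Osum l := by
  induction l using conj_ind with
  | h1 => simp [conj_nil, Osum, sumAlt_nil]
  | h2 l hl ih =>
    rw [conj_of_ne_nil hl, List.map_cons, List.sum_cons, ih (peel_isPartition h), Osum_peel h]

lemma conj_map_sum_E {l : List ℕ} (h : IsPartition l) :
    ((conj l).map (fun c => c/2)).sum = Esum l := by
  induction l using conj_ind with
  | h1 => simp [conj_nil, Esum, sumAlt_nil]
  | h2 l hl ih =>
    rw [conj_of_ne_nil hl, List.map_cons, List.sum_cons, ih (peel_isPartition h), Esum_peel h]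


lemma getD_pos {l : List ℕ} (h : ∀ x ∈ l, 0 < x) {j : ℕ} (hj : j < l.length) :
    0 < l.getD j 0 := by
  rw [List.getD_eq_getElem l 0 hj]
  exact h _ (List.getElem_mem hj)

lemma eq_of_getD {l m : List ℕ} (hl : ∀ x ∈ l, 0 < x) (hm : ∀ x ∈ m, 0 < x)
    (h : ∀ j, l.getD j 0 = m.getD j 0) : l = m := by
  have hlen : l.length = m.length := by
    by_contra hne
    rcases Nat.lt_or_ge l.length m.length with hlt | hge
    · have h1 := List.getD_eq_default l 0 (le_refl l.length)
      have h2 := getD_pos hm hlt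
      rw [← h l.length] at h2; omega
    · have hlt : m.length < l.length := by omega
      have h1 := List.getD_eq_default m 0 (le_refl m.length)
      have h2 := getD_pos hl hlt
      rw [h m.length] at h2; omega
  apply List.ext_getElem hlen
  intro i h1 h2
  have := h i
  rwa [List.getD_eq_getElem l 0 h1, List.getD_eq_getElem m 0 h2] at this

lemma all_one {a : ℕ} {m : List ℕ} (h : IsPartition (a :: m)) (ha : a = 1) :
    ∀ x ∈ a :: m, x = 1 := by
  intro x hx
  rcases hx with _ | hx
  · exact ha
  · have h1 := List.rel_of_pairwise_cons h.1 (a' := x) (by assumption)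
    have h2 := h.2 x (List.mem_cons_of_mem a (by assumption))
    omega

lemma peel_eq_nil_of_all_one {m : List ℕ} (h : ∀ x ∈ m, x = 1) : peel m = [] := by
  rw [peel, List.filter_eq_nil_iff]
  intro x hx
  rcases List.mem_map.mp hx with ⟨y, hy, rfl⟩
  simp [h y hy]

lemma peel_getD {l : List ℕ} (h : IsPartition l) (j : ℕ) :
    (peel l).getD j 0 = l.getD j 0 - 1 := by
  induction l generalizing j with
  | nil => simp [peel_nil]
  | cons a m ih =>
    have ha1 : 1 ≤ a := h.2 a (by simp)
    by_cases ha : a - 1 = 0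
    · have hone : ∀ x ∈ a :: m, x = 1 := all_one h (by omega)
      have : peel (a :: m) = [] := peel_eq_nil_of_all_one hone
      rw [this]
      have : (a :: m).getD j 0 ≤ 1 := by
        rcases Nat.lt_or_ge j (a :: m).length with hj | hj
        · rw [List.getD_eq_getElem _ 0 hj]
          exact le_of_eq (hone _ (List.getElem_mem hj))
        · rw [List.getD_eq_default _ 0 hj]; omega
      rw [List.getD_nil]; omega
    · have hpeel : peel (a :: m) = (a - 1) :: peel m := by simp [peel, List.filter_cons, ha]
      rcases j with _ | j
      · simp [hpeel]
      · rw [hpeel, List.getD_cons_succ, List.getD_cons_succ]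
        exact ih (tail_isPartition h) j

lemma conj_getD {l : List ℕ} (h : IsPartition l) :
    ∀ j, (conj l).getD j 0 = l.countP (fun x => decide (j < x)) := by
  induction l using conj_ind with
  | h1 => intro j; simp [conj_nil]
  | h2 l hl ih =>
    intro j
    rw [conj_of_ne_nil hl]
    rcases j with _ | j
    · rw [List.getD_cons_zero]
      symm
      rw [List.countP_eq_length]
      intro x hx
      simpa using h.2 x hx
    · rw [List.getD_cons_succ, ih (peel_isPartition h) j]
      rw [peel, List.countP_filter, List.countP_map]
      apply List.countP_congr
      intro x hx
      have hx1 := h.2 x hx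
      constructor <;> intro hh <;> simp at hh ⊢ <;> omega

lemma conj_countP {l : List ℕ} (h : IsPartition l) :
    ∀ j, (conj l).countP (fun x => decide (j < x)) = l.getD j 0 := by
  induction l using conj_ind with
  | h1 => intro j; simp [conj_nil]
  | h2 l hl ih =>
    intro j
    rw [conj_of_ne_nil hl, List.countP_cons, ih (peel_isPartition h) j, peel_getD h j]
    rcases Nat.lt_or_ge j l.length with hj | hj
    · have := getD_pos h.2 hj
      simp only [decide_eq_true_eq]
      rw [if_pos hj]
      omega
    · rw [List.getD_eq_default _ 0 hj]
      simp only [decide_eq_true_eq]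
      rw [if_neg (by omega)]

lemma conj_conj {l : List ℕ} (h : IsPartition l) : conj (conj l) = l := by
  apply eq_of_getD (conj_isPartition (conj l)).2 h.2
  intro j
  rw [conj_getD (conj_isPartition l) j, conj_countP h j]


section listOf

variable (p : ℕ → ℕ) (M : ℕ)

/-- the partition with `v i` parts equal to `p i`. -/
def listOf (v : Fin M → ℕ) : List ℕ :=
  ((List.finRange M).reverse).flatMap (fun i => List.replicate (v i) (p i.1))

variable {p M}
variable (hp : StrictMono p) (hp0 : 0 < p 0)

lemma mem_listOf {v : Fin M → ℕ} {x : ℕ} (hx : x ∈ listOf p M v) :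
    ∃ i : Fin M, x = p i.1 ∧ 0 < v i := by
  rw [listOf, List.mem_flatMap] at hx
  obtain ⟨i, _, hx⟩ := hx
  rw [List.mem_replicate] at hx
  exact ⟨i, hx.2, Nat.pos_of_ne_zero (by rintro h0; rw [h0] at hx; simp at hx)⟩

include hp in
lemma listOf_sorted (v : Fin M → ℕ) : (listOf p M v).Pairwise (· ≥ ·) := by
  rw [listOf, List.flatMap_def, List.pairwise_flatten]
  constructor
  · intro l hl
    rw [List.mem_map] at hl
    obtain ⟨i, _, rfl⟩ := hl
    rw [List.pairwise_replicate]
    right; rfl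
  · rw [List.map_reverse, List.pairwise_reverse]
    apply List.Pairwise.map _ _ (List.pairwise_lt_finRange M)
    intro a b hab x hx y hy
    rw [List.eq_of_mem_replicate hx, List.eq_of_mem_replicate hy]
    exact le_of_lt (hp hab)

include hp hp0 in
lemma listOf_pos {v : Fin M → ℕ} : ∀ x ∈ listOf p M v, 0 < x := by
  intro x hx
  obtain ⟨i, rfl, _⟩ := mem_listOf hx
  exact lt_of_lt_of_le hp0 (hp.monotone (Nat.zero_le _))

include hp hp0 in
lemma listOf_isPartition (v : Fin M → ℕ) : IsPartition (listOf p M v) :=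
  ⟨listOf_sorted hp v, listOf_pos hp hp0⟩

lemma listOf_map_sum (f : ℕ → ℕ) (v : Fin M → ℕ) :
    ((listOf p M v).map f).sum = ∑ i : Fin M, v i * f (p i.1) := by
  rw [listOf, List.flatMap_def, List.map_flatten, List.map_map, List.sum_flatten,
    List.map_map, List.map_reverse, List.sum_reverse, Fin.sum_univ_def]
  congr 1
  apply List.map_congr_left
  intro i _
  simp [List.sum_replicate, Function.comp, smul_eq_mul]

include hp in
lemma listOf_count (v : Fin M → ℕ) (i : Fin M) :
    (listOf p M v).count (p i.1) = v i := by
  rw [listOf, List.flatMap_def, List.count_flatten, List.map_map, List.map_reverse,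
    List.sum_reverse]
  have : ∀ j : Fin M, ((List.count (p i.1) ∘ fun j : Fin M => List.replicate (v j) (p j.1)) j)
      = if j = i then v j else 0 := by
    intro j
    simp only [Function.comp, List.count_replicate]
    by_cases hj : j = i
    · simp [hj]
    · have : p j.1 ≠ p i.1 := fun hh => hj (Fin.ext (hp.injective hh))
      simp [this, hj]
  rw [List.map_congr_left (fun j _ => this j), ← Fin.sum_univ_def]
  simp

include hp in
lemma listOf_count_eq_zero (v : Fin M → ℕ) {x : ℕ} (hx : ∀ i : Fin M, p i.1 ≠ x) :
    (listOf p M v).count x = 0 := by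
  rw [List.count_eq_zero]
  intro hmem
  obtain ⟨i, rfl, _⟩ := mem_listOf hmem
  exact hx i rfl

include hp in
lemma listOf_counts_eq {m : List ℕ} (hm : IsPartition m)
    (hmem : ∀ x ∈ m, ∃ i : Fin M, p i.1 = x) :
    listOf p M (fun i => m.count (p i.1)) = m := by
  apply List.Perm.eq_of_pairwise' (listOf_sorted hp _) hm.1
  rw [List.perm_iff_count]
  intro x
  by_cases hx : ∃ i : Fin M, p i.1 = x
  · obtain ⟨i, rfl⟩ := hx
    exact listOf_count hp _ i
  · push_neg at hx
    rw [listOf_count_eq_zero hp _ hx, eq_comm, List.count_eq_zero]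
    intro hxm
    obtain ⟨i, hi⟩ := hmem x hxm
    exact hx i hi

end listOf


lemma length_le_two_osum : ∀ l : List ℕ, (∀ x ∈ l, 0 < x) → l.length ≤ 2 * Osum l
  | [], _ => by simp [Osum, sumAlt_nil]
  | [a], h => by
    have := h a (by simp)
    simp only [Osum, sumAlt_single, List.length_cons, List.length_nil, id]
    omega
  | a :: b :: l, h => by
    have ih := length_le_two_osum l (fun x hx => h x (by simp [hx]))
    have := h a (by simp)
    simp only [Osum, sumAlt_cons_cons, List.length_cons, id] at *
    omega

lemma hp1 : StrictMono (fun i : ℕ => i + 1) := fun a b hab => by show a + 1 < b + 1; omega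
lemma hp2 : StrictMono (fun i : ℕ => 2 * (i + 1)) := fun a b hab => by show 2*(a+1) < 2*(b+1); omega

/-- Reduction of the LHS to a finite sum over multiplicity vectors. -/
lemma LHS_eq (n : ℕ) :
    (∑ᶠ l ∈ {l : List ℕ | IsPartition l ∧ Osum l = n}, ((-1 : ℤ)) ^ Esum l)
    = ∑ v ∈ (Fintype.piFinset fun _ : Fin (2*n) => Finset.range (n+1)).filter
        (fun v => ∑ i, v i * ((i.1+2)/2) = n),
      (-1 : ℤ) ^ (∑ i : Fin (2*n), v i * ((i.1+1)/2)) := by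
  classical
  set p : ℕ → ℕ := fun i => i + 1 with hpdef
  set A := (Fintype.piFinset fun _ : Fin (2*n) => Finset.range (n+1)).filter
      (fun v => ∑ i, v i * ((i.1+2)/2) = n) with hA
  set Φ : List ℕ → (Fin (2*n) → ℕ) := fun l i => (conj l).count (i.1+1) with hΦ
  set Ψ : (Fin (2*n) → ℕ) → List ℕ := fun v => conj (listOf p (2*n) v) with hΨ
  -- facts about elements of S
  have key : ∀ l : List ℕ, IsPartition l → Osum l = n →
      listOf p (2*n) (Φ l) = conj l := by
    intro l hl hOl
    apply listOf_counts_eq hp1 (conj_isPartition l)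
    intro x hx
    have h1 := conj_mem x hx
    have h2 : l.length ≤ 2 * n := hOl ▸ length_le_two_osum l hl.2
    exact ⟨⟨x - 1, by omega⟩, by simp [hpdef]; omega⟩
  have keyO : ∀ l : List ℕ, IsPartition l → Osum l = n →
      ∑ i : Fin (2*n), Φ l i * ((i.1+2)/2) = n := by
    intro l hl hOl
    have h1 := listOf_map_sum (p := p) (M := 2*n) (fun c => (c+1)/2) (Φ l)
    rw [key l hl hOl, conj_map_sum_O hl, hOl] at h1
    rw [← h1]
  have keyE : ∀ l : List ℕ, IsPartition l → Osum l = n →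
      ∑ i : Fin (2*n), Φ l i * ((i.1+1)/2) = Esum l := by
    intro l hl hOl
    have h1 := listOf_map_sum (p := p) (M := 2*n) (fun c => c/2) (Φ l)
    rw [key l hl hOl, conj_map_sum_E hl] at h1
    rw [← h1]
  have memA : ∀ l : List ℕ, IsPartition l → Osum l = n → Φ l ∈ A := by
    intro l hl hOl
    rw [hA, Finset.mem_filter]
    refine ⟨?_, keyO l hl hOl⟩
    rw [Fintype.mem_piFinset]
    intro i
    rw [Finset.mem_range]
    have hterm : Φ l i * ((i.1+2)/2) ≤ n :=
      le_of_le_of_eq (Finset.single_le_sum (f := fun j : Fin (2*n) => Φ l j * ((j.1+2)/2))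
        (fun j _ => Nat.zero_le _) (Finset.mem_univ i)) (keyO l hl hOl)
    have h2 : 1 ≤ (i.1+2)/2 := by omega
    have h3 : Φ l i ≤ Φ l i * ((i.1+2)/2) := Nat.le_mul_of_pos_right _ h2
    omega
  have memS : ∀ v, v ∈ A → IsPartition (Ψ v) ∧ Osum (Ψ v) = n := by
    intro v hv
    rw [hA, Finset.mem_filter] at hv
    refine ⟨conj_isPartition _, ?_⟩
    have hlp : IsPartition (listOf p (2*n) v) := listOf_isPartition hp1 (by omega) v
    have h1 := conj_map_sum_O (conj_isPartition (listOf p (2*n) v))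
    rw [conj_conj hlp, listOf_map_sum] at h1
    show Osum (conj (listOf p (2*n) v)) = n
    rw [← h1]
    exact hv.2
  have rt1 : ∀ l : List ℕ, IsPartition l → Osum l = n → Ψ (Φ l) = l := by
    intro l hl hOl
    show conj (listOf p (2*n) (Φ l)) = l
    rw [key l hl hOl, conj_conj hl]
  have rt2 : ∀ v, v ∈ A → Φ (Ψ v) = v := by
    intro v _
    funext i
    have hlp : IsPartition (listOf p (2*n) v) := listOf_isPartition hp1 (by omega) v
    show (conj (conj (listOf p (2*n) v))).count (i.1+1) = v i
    rw [conj_conj hlp]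
    exact listOf_count hp1 v i
  -- the set S is the coercion of the finset A.image Ψ
  have hSet : {l : List ℕ | IsPartition l ∧ Osum l = n} = ↑(A.image Ψ) := by
    ext l
    simp only [Set.mem_setOf_eq, Finset.coe_image, Set.mem_image, Finset.mem_coe]
    constructor
    · rintro ⟨h1, h2⟩
      exact ⟨Φ l, memA l h1 h2, rt1 l h1 h2⟩
    · rintro ⟨v, hv, rfl⟩
      exact memS v hv
  rw [hSet, finsum_mem_coe_finset, Finset.sum_image (fun v hv w hw hvw => by
    rw [← rt2 v hv, ← rt2 w hw, hvw])]
  apply Finset.sum_congr rfl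
  intro v hv
  congr 1
  obtain ⟨h1, h2⟩ := memS v hv
  rw [← keyE (Ψ v) h1 h2, rt2 v hv]

/-- Reduction of the RHS to a finite count of multiplicity vectors. -/
lemma RHS_eq (n : ℕ) :
    (Nat.card {l : List ℕ // IsPartition l ∧ l.sum = n ∧ ∀ x ∈ l, Even x})
    = ((Fintype.piFinset fun _ : Fin n => Finset.range (n+1)).filter
        (fun w => ∑ i : Fin n, (2*(i.1+1)) * w i = n)).card := by
  classical
  set p : ℕ → ℕ := fun i => 2 * (i + 1) with hpdef
  set B := (Fintype.piFinset fun _ : Fin n => Finset.range (n+1)).filter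
      (fun w => ∑ i : Fin n, (2*(i.1+1)) * w i = n) with hB
  have hsum_eq : ∀ w : Fin n → ℕ, (listOf p n w).sum = ∑ i : Fin n, (2*(i.1+1)) * w i := by
    intro w
    have := listOf_map_sum (p := p) (M := n) id w
    rw [List.map_id] at this
    rw [this]
    apply Finset.sum_congr rfl
    intro i _
    simp [hpdef, mul_comm]
  have key : ∀ l : List ℕ, IsPartition l → l.sum = n → (∀ x ∈ l, Even x) →
      listOf p n (fun i => l.count (p i.1)) = l := by
    intro l hl hsum heven
    apply listOf_counts_eq hp2 hl
    intro x hx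
    obtain ⟨m, hm⟩ := heven x hx
    have hx0 : 0 < x := hl.2 x hx
    have hxle : x ≤ n := hsum ▸ List.single_le_sum (fun y _ => Nat.zero_le y) x hx
    exact ⟨⟨m - 1, by omega⟩, by simp [hpdef]; omega⟩
  have memB : ∀ l : List ℕ, IsPartition l → l.sum = n → (∀ x ∈ l, Even x) →
      (fun i : Fin n => l.count (p i.1)) ∈ B := by
    intro l hl hsum heven
    have hs : ∑ i : Fin n, (2*(i.1+1)) * l.count (p i.1) = n := by
      rw [← hsum_eq, key l hl hsum heven, hsum]
    rw [hB, Finset.mem_filter]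
    refine ⟨?_, hs⟩
    rw [Fintype.mem_piFinset]
    intro i
    rw [Finset.mem_range]
    have hterm : (2*(i.1+1)) * l.count (p i.1) ≤ n :=
      le_of_le_of_eq (Finset.single_le_sum (f := fun j : Fin n => (2*(j.1+1)) * l.count (p j.1))
        (fun j _ => Nat.zero_le _) (Finset.mem_univ i)) hs
    have : l.count (p i.1) ≤ (2*(i.1+1)) * l.count (p i.1) := Nat.le_mul_of_pos_left _ (by omega)
    omega
  have memP : ∀ w, w ∈ B → IsPartition (listOf p n w) ∧ (listOf p n w).sum = n ∧
      ∀ x ∈ listOf p n w, Even x := by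
    intro w hw
    rw [hB, Finset.mem_filter] at hw
    refine ⟨listOf_isPartition hp2 (by omega) w, by rw [hsum_eq]; exact hw.2, ?_⟩
    intro x hx
    obtain ⟨i, rfl, _⟩ := mem_listOf hx
    exact ⟨i.1 + 1, by simp [hpdef]; ring⟩
  have e : {l : List ℕ // IsPartition l ∧ l.sum = n ∧ ∀ x ∈ l, Even x} ≃ {w // w ∈ B} := by
    refine ⟨fun l => ⟨fun i => l.1.count (p i.1), memB l.1 l.2.1 l.2.2.1 l.2.2.2⟩,
      fun w => ⟨listOf p n w.1, by
        obtain ⟨h1, h2, h3⟩ := memP w.1 w.2; exact ⟨h1, h2, h3⟩⟩, ?_, ?_⟩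
    · intro l
      apply Subtype.ext
      exact key l.1 l.2.1 l.2.2.1 l.2.2.2
    · intro w
      apply Subtype.ext
      funext i
      exact listOf_count hp2 w.1 i
  rw [Nat.card_congr e, Nat.card_eq_finsetCard]


lemma sum_range_double {α : Type*} [AddCommMonoid α] (g : ℕ → α) (N : ℕ) :
    ∑ j ∈ Finset.range (2*N), g j = ∑ k ∈ Finset.range N, (g (2*k) + g (2*k+1)) := by
  induction N with
  | zero => simp
  | succ m ih =>
    rw [Finset.sum_range_succ, ← ih, Nat.mul_succ, show 2*m+2 = (2*m+1)+1 from rfl,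
      Finset.sum_range_succ, Finset.sum_range_succ, add_assoc]

lemma sum_univ_pair {α : Type*} [AddCommMonoid α] {N : ℕ} (g : Fin (2*N) → α) :
    ∑ i, g i = ∑ k : Fin N,
      (g ⟨2*k.1, by have := k.isLt; omega⟩ + g ⟨2*k.1+1, by have := k.isLt; omega⟩) := by
  classical
  set f : ℕ → α := fun j => if h : j < 2*N then g ⟨j, h⟩ else 0 with hf
  have h1 : ∑ i, g i = ∑ i : Fin (2*N), f i.1 :=
    Finset.sum_congr rfl (fun i _ => by simp only [hf]; rw [dif_pos i.isLt])
  rw [h1, Fin.sum_univ_eq_sum_range, sum_range_double,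
    ← Fin.sum_univ_eq_sum_range (fun k => f (2*k) + f (2*k+1)) N]
  apply Finset.sum_congr rfl
  intro k _
  have h2 : 2*k.1 < 2*N := by have := k.isLt; omega
  have h3 : 2*k.1+1 < 2*N := by have := k.isLt; omega
  simp only [hf]
  rw [dif_pos h2, dif_pos h3]

lemma neg_one_sum_range (N : ℕ) : ∑ m ∈ Finset.range N, (-1:ℤ)^m = if Even N then 0 else 1 := by
  induction N with
  | zero => simp
  | succ m ih =>
    rw [Finset.sum_range_succ, ih]
    rcases Nat.even_or_odd m with h | h
    · rw [if_pos h, Even.neg_one_pow h,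
        if_neg (by simp [Nat.even_add_one, Nat.not_even_iff_odd, h])]
      ring
    · rw [if_neg (by simp [Nat.not_even_iff_odd, h]), Odd.neg_one_pow h,
        if_pos (by simp [Nat.even_add_one, Nat.not_even_iff_odd, h])]
      ring

lemma factor_sum (K t : ℕ) :
    ∑ j ∈ Finset.range (t+1), (-1:ℤ)^(K*j + (K+1)*(t-j)) = if Even t then 1 else 0 := by
  have h1 : ∀ j ∈ Finset.range (t+1), (-1:ℤ)^(K*j + (K+1)*(t-j)) = (-1)^(K*t) * (-1)^(t-j) := by
    intro j hj
    rw [Finset.mem_range] at hj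
    obtain ⟨d, rfl⟩ : ∃ d, t = j + d := ⟨t - j, by omega⟩
    rw [← pow_add]
    congr 1
    have hd : j + d - j = d := by omega
    rw [hd]
    ring
  rw [Finset.sum_congr rfl h1, ← Finset.mul_sum]
  have h2 : ∑ j ∈ Finset.range (t+1), (-1:ℤ)^(t-j) = ∑ j ∈ Finset.range (t+1), (-1:ℤ)^j := by
    conv_rhs => rw [← Finset.sum_range_reflect]
    exact Finset.sum_congr rfl (fun j _ => rfl)
  rw [h2, neg_one_sum_range]
  rcases Nat.even_or_odd t with h | h
  · rw [if_neg (by simp [Nat.even_add_one, Nat.not_even_iff_odd, h]), if_pos h,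
      Even.neg_one_pow (h.mul_left K)]
    ring
  · rw [if_pos (by simp [Nat.even_add_one, Nat.not_even_iff_odd, h]),
      if_neg (by simp [Nat.not_even_iff_odd, h])]
    ring

set_option maxHeartbeats 2000000 in
lemma core (n : ℕ) :
    ∑ v ∈ (Fintype.piFinset fun _ : Fin (2*n) => Finset.range (n+1)).filter
        (fun v => ∑ i, v i * ((i.1+2)/2) = n),
      (-1 : ℤ) ^ (∑ i : Fin (2*n), v i * ((i.1+1)/2))
    = ((Fintype.piFinset fun _ : Fin n => Finset.range (n+1)).filter
        (fun w => ∑ i : Fin n, (2*(i.1+1)) * w i = n)).card := by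
  classical
  set ek : Fin n → Fin (2*n) := fun k => ⟨2*k.1, by have := k.isLt; omega⟩ with hek
  set ok : Fin n → Fin (2*n) := fun k => ⟨2*k.1+1, by have := k.isLt; omega⟩ with hok
  have P1 : ∀ v : Fin (2*n) → ℕ, ∑ i, v i * ((i.1+2)/2)
      = ∑ k : Fin n, (k.1+1) * (v (ek k) + v (ok k)) := by
    intro v
    rw [sum_univ_pair (fun i : Fin (2*n) => v i * ((i.1+2)/2))]
    apply Finset.sum_congr rfl
    intro k _
    show v (ek k) * ((2*k.1+2)/2) + v (ok k) * ((2*k.1+1+2)/2) = _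
    have h2 : (2*k.1+2)/2 = k.1+1 := by omega
    have h3 : (2*k.1+1+2)/2 = k.1+1 := by omega
    rw [h2, h3]; ring
  have P2 : ∀ v : Fin (2*n) → ℕ, ∑ i, v i * ((i.1+1)/2)
      = ∑ k : Fin n, (k.1 * v (ek k) + (k.1+1) * v (ok k)) := by
    intro v
    rw [sum_univ_pair (fun i : Fin (2*n) => v i * ((i.1+1)/2))]
    apply Finset.sum_congr rfl
    intro k _
    show v (ek k) * ((2*k.1+1)/2) + v (ok k) * ((2*k.1+1+1)/2) = _
    have h2 : (2*k.1+1)/2 = k.1 := by omega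
    have h3 : (2*k.1+1+1)/2 = k.1+1 := by omega
    rw [h2, h3]; ring
  set A := (Fintype.piFinset fun _ : Fin (2*n) => Finset.range (n+1)).filter
      (fun v => ∑ i, v i * ((i.1+2)/2) = n) with hA
  set Tset := (Fintype.piFinset fun _ : Fin n => Finset.range (n+1)).filter
      (fun t => ∑ k : Fin n, (k.1+1) * t k = n) with hT
  set Sg := Tset.sigma (fun t => Fintype.piFinset fun k : Fin n => Finset.range (t k + 1)) with hSg
  set F : (Fin (2*n) → ℕ) → ((_ : Fin n → ℕ) × (Fin n → ℕ)) :=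
    fun v => ⟨fun k => v (ek k) + v (ok k), fun k => v (ek k)⟩ with hF
  set G : ((_ : Fin n → ℕ) × (Fin n → ℕ)) → (Fin (2*n) → ℕ) :=
    fun x => fun i => if i.1 % 2 = 0 then x.2 ⟨i.1/2, by have := i.isLt; omega⟩
      else x.1 ⟨i.1/2, by have := i.isLt; omega⟩ - x.2 ⟨i.1/2, by have := i.isLt; omega⟩ with hG
  have hGe : ∀ (x : (_ : Fin n → ℕ) × (Fin n → ℕ)) (k : Fin n), G x (ek k) = x.2 k := by
    intro x k
    rw [hG]
    dsimp only
    rw [if_pos (show (ek k).1 % 2 = 0 from by show 2*k.1 % 2 = 0; omega)]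
    have h5 : (ek k).1/2 = k.1 := by show 2*k.1/2 = k.1; omega
    simp only [h5, Fin.eta]
  have hGo : ∀ (x : (_ : Fin n → ℕ) × (Fin n → ℕ)) (k : Fin n), G x (ok k) = x.1 k - x.2 k := by
    intro x k
    rw [hG]
    dsimp only
    rw [if_neg (show ¬ (ok k).1 % 2 = 0 from by show ¬ (2*k.1+1) % 2 = 0; omega)]
    have h5 : (ok k).1/2 = k.1 := by show (2*k.1+1)/2 = k.1; omega
    simp only [h5, Fin.eta]
  set gfun : ((_ : Fin n → ℕ) × (Fin n → ℕ)) → ℤ :=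
    fun x => (-1)^(∑ k : Fin n, (k.1 * x.2 k + (k.1+1) * (x.1 k - x.2 k))) with hgfun
  have hFA : ∀ v ∈ A, F v ∈ Sg := by
    intro v hv
    rw [hA, Finset.mem_filter] at hv
    obtain ⟨hvb, hO⟩ := hv
    rw [P1] at hO
    rw [hSg, Finset.mem_sigma]
    constructor
    · rw [hT, Finset.mem_filter]
      refine ⟨?_, hO⟩
      rw [Fintype.mem_piFinset]
      intro k
      rw [Finset.mem_range]
      have hterm : (k.1+1) * (v (ek k) + v (ok k)) ≤ n :=
        le_of_le_of_eq (Finset.single_le_sum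
          (f := fun j : Fin n => (j.1+1) * (v (ek j) + v (ok j)))
          (fun j _ => Nat.zero_le _) (Finset.mem_univ k)) hO
      have h9 : v (ek k) + v (ok k) ≤ (k.1+1) * (v (ek k) + v (ok k)) :=
        Nat.le_mul_of_pos_left _ (by omega)
      show v (ek k) + v (ok k) < n + 1
      omega
    · rw [Fintype.mem_piFinset]
      intro k
      rw [Finset.mem_range]
      show v (ek k) < v (ek k) + v (ok k) + 1
      omega
  have hGA : ∀ x ∈ Sg, G x ∈ A := by
    intro x hx
    rw [hSg, Finset.mem_sigma, hT, Finset.mem_filter] at hx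
    obtain ⟨⟨htb, htO⟩, hab⟩ := hx
    rw [Fintype.mem_piFinset] at htb hab
    rw [hA, Finset.mem_filter]
    constructor
    · rw [Fintype.mem_piFinset]
      intro i
      rw [Finset.mem_range]
      have h1 := htb ⟨i.1/2, by have := i.isLt; omega⟩
      rw [Finset.mem_range] at h1
      rw [hG]
      dsimp only
      split
      · have h2 := hab ⟨i.1/2, by have := i.isLt; omega⟩
        rw [Finset.mem_range] at h2
        omega
      · omega
    · rw [P1]
      have hsum : ∀ k : Fin n, G x (ek k) + G x (ok k) = x.1 k := by
        intro k
        rw [hGe, hGo]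
        have h2 := hab k
        rw [Finset.mem_range] at h2
        omega
      rw [Finset.sum_congr rfl (fun k _ => by rw [hsum k])]
      exact htO
  have hGF : ∀ v ∈ A, G (F v) = v := by
    intro v _
    funext i
    rcases Nat.even_or_odd i.1 with h | h
    · obtain ⟨m, hm⟩ := h
      have hi : i = ek ⟨i.1/2, by have := i.isLt; omega⟩ := Fin.ext (by show _ = 2*(i.1/2); omega)
      rw [hi, hGe]
    · have hi : i = ok ⟨i.1/2, by have := i.isLt; omega⟩ := by
        apply Fin.ext
        show _ = 2*(i.1/2)+1
        obtain ⟨m, hm⟩ := h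
        omega
      rw [hi, hGo]
      show (fun k => v (ek k) + v (ok k)) _ - (fun k => v (ek k)) _ = _
      simp only
      omega
  have hFG : ∀ x ∈ Sg, F (G x) = x := by
    intro x hx
    rcases x with ⟨t, a⟩
    rw [hSg, Finset.mem_sigma] at hx
    obtain ⟨-, hab⟩ := hx
    rw [Fintype.mem_piFinset] at hab
    dsimp only at hab
    have h1 : (fun k => G ⟨t, a⟩ (ek k) + G ⟨t, a⟩ (ok k)) = t := by
      funext k
      rw [hGe, hGo]
      have h2 := hab k
      rw [Finset.mem_range] at h2
      show a k + (t k - a k) = t k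
      omega
    have h2 : (fun k => G ⟨t, a⟩ (ek k)) = a := by
      funext k
      rw [hGe]
    show (⟨fun k => G ⟨t, a⟩ (ek k) + G ⟨t, a⟩ (ok k), fun k => G ⟨t, a⟩ (ek k)⟩ :
      (_ : Fin n → ℕ) × (Fin n → ℕ)) = ⟨t, a⟩
    rw [h1, h2]
  have hval : ∀ v ∈ A, (-1:ℤ)^(∑ i : Fin (2*n), v i * ((i.1+1)/2)) = gfun (F v) := by
    intro v _
    rw [hgfun]
    dsimp only
    congr 1
    rw [P2]
    apply Finset.sum_congr rfl
    intro k _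
    have h9 : (v (ek k) + v (ok k)) - v (ek k) = v (ok k) := by omega
    show k.1 * v (ek k) + (k.1+1) * v (ok k)
      = k.1 * v (ek k) + (k.1+1) * ((v (ek k) + v (ok k)) - v (ek k))
    rw [h9]
  rw [Finset.sum_nbij' F G hFA hGA hGF hFG hval, hSg, Finset.sum_sigma]
  have inner : ∀ t ∈ Tset,
      ∑ a ∈ (Fintype.piFinset fun k : Fin n => Finset.range (t k + 1)), gfun ⟨t, a⟩
      = if (∀ k, Even (t k)) then 1 else 0 := by
    intro t _
    have h1 : ∀ a, gfun ⟨t, a⟩ = ∏ k : Fin n, (-1:ℤ)^(k.1 * a k + (k.1+1) * (t k - a k)) := by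
      intro a
      rw [hgfun, Finset.prod_pow_eq_pow_sum]
    have hswap : ∑ a ∈ Fintype.piFinset (fun k : Fin n => Finset.range (t k + 1)),
        ∏ k : Fin n, (-1:ℤ)^(k.1 * a k + (k.1+1) * (t k - a k))
        = ∏ k : Fin n, ∑ j ∈ Finset.range (t k + 1), (-1:ℤ)^(k.1 * j + (k.1+1) * (t k - j)) :=
      (Finset.prod_univ_sum (fun k : Fin n => Finset.range (t k + 1))
        (fun k j => (-1:ℤ)^(k.1 * j + (k.1+1) * (t k - j)))).symm
    rw [Finset.sum_congr rfl (fun a _ => h1 a), hswap]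
    have h2 : ∀ k : Fin n, ∑ j ∈ Finset.range (t k + 1), (-1:ℤ)^(k.1 * j + (k.1+1) * (t k - j))
        = if Even (t k) then 1 else 0 := fun k => factor_sum k.1 (t k)
    rw [Finset.prod_congr rfl (fun k _ => h2 k)]
    by_cases h : ∀ k, Even (t k)
    · rw [if_pos h]
      apply Finset.prod_eq_one
      intro k _
      rw [if_pos (h k)]
    · rw [if_neg h]
      push_neg at h
      obtain ⟨k, hk⟩ := h
      exact Finset.prod_eq_zero (Finset.mem_univ k) (by rw [if_neg hk])
  rw [Finset.sum_congr rfl inner, Finset.sum_boole]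
  congr 1
  apply Finset.card_nbij' (fun t k => t k / 2) (fun w k => 2 * w k)
  · intro t ht
    rw [Finset.mem_coe, Finset.mem_filter] at ht
    obtain ⟨ht, heven⟩ := ht
    rw [hT, Finset.mem_filter] at ht
    obtain ⟨htb, htO⟩ := ht
    rw [Fintype.mem_piFinset] at htb
    rw [Finset.mem_coe, Finset.mem_filter]
    constructor
    · rw [Fintype.mem_piFinset]
      intro k
      rw [Finset.mem_range]
      have := htb k
      rw [Finset.mem_range] at this
      show t k / 2 < n + 1
      omega
    · have hc : ∑ k : Fin n, (2*(k.1+1)) * (t k / 2) = ∑ k : Fin n, (k.1+1) * t k := by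
        apply Finset.sum_congr rfl
        intro k _
        obtain ⟨m, hm⟩ := heven k
        rw [hm]
        have hm2 : (m + m) / 2 = m := by omega
        rw [hm2]
        ring
      rw [hc]
      exact htO
  · intro w hw
    rw [Finset.mem_coe, Finset.mem_filter] at hw
    obtain ⟨hwb, hwO⟩ := hw
    rw [Fintype.mem_piFinset] at hwb
    rw [Finset.mem_coe, Finset.mem_filter]
    have hterm : ∀ k : Fin n, (2*(k.1+1)) * w k ≤ n := by
      intro k
      exact le_of_le_of_eq (Finset.single_le_sum
        (f := fun j : Fin n => (2*(j.1+1)) * w j)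
        (fun j _ => Nat.zero_le _) (Finset.mem_univ k)) hwO
    constructor
    · rw [hT, Finset.mem_filter]
      constructor
      · rw [Fintype.mem_piFinset]
        intro k
        rw [Finset.mem_range]
        have h8 := hterm k
        have h9 : 2 * w k ≤ (2*(k.1+1)) * w k := Nat.mul_le_mul_right _ (by omega)
        show 2 * w k < n + 1
        omega
      · have hc : ∑ k : Fin n, (k.1+1) * (2 * w k) = ∑ k : Fin n, (2*(k.1+1)) * w k := by
          apply Finset.sum_congr rfl
          intro k _
          ring
        rw [hc]
        exact hwO
    · intro k
      exact ⟨w k, by ring⟩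
  · intro t ht
    rw [Finset.mem_coe, Finset.mem_filter] at ht
    funext k
    show 2 * (t k / 2) = t k
    obtain ⟨m, hm⟩ := ht.2 k
    rw [hm]
    omega
  · intro w _
    funext k
    show (2 * w k) / 2 = w k
    omega

end SPEC


/-- The signed count `∑ (−1)^{E(π)}` over partitions with `O(π) = n` equals the number of
partitions of `n` into even parts. -/

theorem signed_partition_even_count (n : ℕ) :
    (∑ᶠ l ∈ {l : List ℕ | IsPartition l ∧ Osum l = n}, ((-1 : ℤ)) ^ Esum l)
    = (Nat.card {l : List ℕ // IsPartition l ∧ l.sum = n ∧ ∀ x ∈ l, Even x} : ℤ) := by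
  rw [SPEC.LHS_eq n, SPEC.RHS_eq n]
  exact SPEC.core n
end

section
/- For every nonnegative integer N, the following identity holds in ℤ[q]: ∑_{π ∈ D_{≤N}} (−1)^{E(π)} q^{O(π)} = ∏_{i=0}^{⌈N/2⌉ − 1} (1 + q^{2i+1}), where the sum runs over the (finitely many) partitions into distinct parts all ≤ N. -/
lemma sumAlt_cons (f : ℕ → ℕ) (a : ℕ) (l : List ℕ) :
    sumAlt f (a :: l) = f a + sumAlt f l.tail := by
  cases l <;> simp [sumAlt]

lemma Esum_cons (a : ℕ) (l : List ℕ) : Esum (a :: l) = Osum l := rfl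

lemma Osum_cons (a : ℕ) (l : List ℕ) : Osum (a :: l) = a + Esum l := by
  simpa [Osum, Esum] using sumAlt_cons id a l

/-- The finset of strictly decreasing lists of positive integers with parts ≤ N. -/
def Dset : ℕ → Finset (List ℕ)
  | 0 => {[]}
  | n + 1 => Dset n ∪ (Dset n).image (List.cons (n + 1))

lemma mem_Dset (N : ℕ) (l : List ℕ) :
    l ∈ Dset N ↔ IsDistinctPartition l ∧ ∀ x ∈ l, x ≤ N := by
  induction N generalizing l with
  | zero =>
    simp only [Dset, Finset.mem_singleton]
    constructor
    · rintro rfl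
      exact ⟨⟨List.Pairwise.nil, by simp⟩, by simp⟩
    · rintro ⟨⟨_, hpos⟩, hle⟩
      cases l with
      | nil => rfl
      | cons a t =>
        have h1 := hle a (by simp)
        have h2 := hpos a (by simp)
        omega
  | succ n ih =>
    simp only [Dset, Finset.mem_union, Finset.mem_image]
    constructor
    · rintro (h | ⟨t, ht, rfl⟩)
      · obtain ⟨hd, hle⟩ := (ih l).1 h
        exact ⟨hd, fun x hx => (hle x hx).trans (Nat.le_succ n)⟩
      · obtain ⟨⟨hs, hpos⟩, hle⟩ := (ih t).1 ht
        refine ⟨⟨List.pairwise_cons.2 ⟨fun b hb => ?_, hs⟩, ?_⟩, ?_⟩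
        · exact Nat.lt_succ_of_le (hle b hb)
        · intro x hx
          rcases List.mem_cons.1 hx with rfl | hx'
          · exact Nat.succ_pos n
          · exact hpos x hx'
        · intro x hx
          rcases List.mem_cons.1 hx with rfl | hx'
          · exact le_refl _
          · exact (hle x hx').trans (Nat.le_succ n)
    · rintro ⟨⟨hs, hpos⟩, hle⟩
      cases l with
      | nil => exact Or.inl ((ih []).2 ⟨⟨List.Pairwise.nil, by simp⟩, by simp⟩)
      | cons a t =>
        obtain ⟨hlt, hs'⟩ := List.pairwise_cons.1 hs
        by_cases ha : a ≤ n
        · refine Or.inl ((ih (a :: t)).2 ⟨⟨hs, hpos⟩, ?_⟩)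
          intro x hx
          rcases List.mem_cons.1 hx with rfl | hx'
          · exact ha
          · exact le_trans (Nat.le_of_lt (hlt x hx')) ha
        · have haeq : a = n + 1 := le_antisymm (hle a (by simp)) (by omega)
          subst haeq
          refine Or.inr ⟨t, (ih t).2 ⟨⟨hs', fun x hx => hpos x (by simp [hx])⟩,
            fun x hx => Nat.lt_succ_iff.1 (hlt x hx)⟩, rfl⟩

open Polynomial in
lemma schmidt_key (N : ℕ) :
    (∑ l ∈ Dset N, ((-1 : Polynomial ℤ)) ^ Esum l * X ^ Osum l
      = ∏ i ∈ Finset.range ((N + 1) / 2), (1 + X ^ (2 * i + 1))) ∧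
    (∑ l ∈ Dset N, ((-1 : Polynomial ℤ)) ^ Osum l * X ^ Esum l
      = if N % 2 = 1 then 0 else ∏ i ∈ Finset.range (N / 2), (1 + X ^ (2 * i + 1))) := by
  induction N with
  | zero => simp [Dset, Esum, Osum, sumAlt]
  | succ n ih =>
    obtain ⟨ihA, ihB⟩ := ih
    have hdisj : Disjoint (Dset n) ((Dset n).image (List.cons (n + 1))) := by
      rw [Finset.disjoint_left]
      rintro l hl hl'
      obtain ⟨t, _, rfl⟩ := Finset.mem_image.1 hl'
      have := ((mem_Dset n _).1 hl).2 (n + 1) (by simp)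
      omega
    have hinj : ∀ x ∈ Dset n, ∀ y ∈ Dset n,
        List.cons (n + 1) x = List.cons (n + 1) y → x = y := by
      intro x _ y _ h
      simpa using h
    have hsplit : ∀ f : List ℕ → Polynomial ℤ,
        ∑ l ∈ Dset (n + 1), f l = ∑ l ∈ Dset n, f l + ∑ l ∈ Dset n, f ((n + 1) :: l) := by
      intro f
      show ∑ l ∈ Dset n ∪ (Dset n).image (List.cons (n + 1)), f l = _
      rw [Finset.sum_union hdisj, Finset.sum_image hinj]
    have hA : ∑ l ∈ Dset (n + 1), ((-1 : Polynomial ℤ)) ^ Esum l * X ^ Osum l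
        = (∑ l ∈ Dset n, ((-1 : Polynomial ℤ)) ^ Esum l * X ^ Osum l)
          + X ^ (n + 1) * ∑ l ∈ Dset n, ((-1 : Polynomial ℤ)) ^ Osum l * X ^ Esum l := by
      rw [hsplit]
      congr 1
      rw [Finset.mul_sum]
      refine Finset.sum_congr rfl fun l _ => ?_
      rw [Esum_cons, Osum_cons, pow_add]
      ring
    have hB : ∑ l ∈ Dset (n + 1), ((-1 : Polynomial ℤ)) ^ Osum l * X ^ Esum l
        = (∑ l ∈ Dset n, ((-1 : Polynomial ℤ)) ^ Osum l * X ^ Esum l)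
          + (-1 : Polynomial ℤ) ^ (n + 1)
            * ∑ l ∈ Dset n, ((-1 : Polynomial ℤ)) ^ Esum l * X ^ Osum l := by
      rw [hsplit]
      congr 1
      rw [Finset.mul_sum]
      refine Finset.sum_congr rfl fun l _ => ?_
      rw [Esum_cons, Osum_cons, pow_add]
      ring
    rcases Nat.even_or_odd n with he | ho
    · -- n even
      have h0 : n % 2 = 0 := Nat.even_iff.1 he
      have he1 : (n + 1) / 2 = n / 2 := by omega
      have he2 : (n + 1 + 1) / 2 = n / 2 + 1 := by omega
      have he3 : 2 * (n / 2) + 1 = n + 1 := by omega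
      have hneg : ((-1 : Polynomial ℤ)) ^ (n + 1) = -1 :=
        Odd.neg_one_pow ⟨n / 2, by omega⟩
      constructor
      · rw [hA, ihA, ihB, if_neg (by omega), he1, he2, Finset.prod_range_succ, he3]
        ring
      · rw [hB, ihA, ihB, if_neg (by omega), if_pos (by omega), hneg, he1]
        ring
    · -- n odd
      have h1 : n % 2 = 1 := Nat.odd_iff.1 ho
      have he2 : (n + 1 + 1) / 2 = (n + 1) / 2 := by omega
      have hneg : ((-1 : Polynomial ℤ)) ^ (n + 1) = 1 :=
        Even.neg_one_pow ⟨(n + 1) / 2, by omega⟩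
      constructor
      · rw [hA, ihA, ihB, if_pos h1, he2]
        ring
      · rw [hB, ihA, ihB, if_pos h1, if_neg (by omega), hneg]
        ring

/-- In `ℤ[q]`:
`∑_{π ∈ D_{≤N}} (−1)^{E(π)} q^{O(π)} = ∏_{i=0}^{⌈N/2⌉−1} (1 + q^{2i+1})`. -/
theorem finite_signed_schmidt (N : ℕ) :
    ∑ᶠ l ∈ {l : List ℕ | IsDistinctPartition l ∧ ∀ x ∈ l, x ≤ N},
      ((-1 : Polynomial ℤ)) ^ Esum l * Polynomial.X ^ Osum l
    = ∏ i ∈ Finset.range ((N + 1) / 2), (1 + Polynomial.X ^ (2 * i + 1)) := by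
  have hset : {l : List ℕ | IsDistinctPartition l ∧ ∀ x ∈ l, x ≤ N} = ↑(Dset N) := by
    ext l
    simp [mem_Dset]
  rw [hset, finsum_mem_coe_finset]
  exact (schmidt_key N).1
end

section
/- Let r, t, s be nonnegative integers with r + t > 0 and let ε ∈ {1, −1}. Then the following identity holds in ℤ⟦q⟧: ∑_{π ∈ D} (−1)^{⌈E⌉(π)} ε^{⌊E⌋(π)} q^{r·⌈O⌉(π) + t·⌊O⌋(π) + s·⌊E⌋(π)} = ∏_{i≥0} (1 + (−ε)^i q^{r + (r+t+s)i}); i.e., for every n ≥ 0 the signed count ∑ (−1)^{⌈E⌉(π)} ε^{⌊E⌋(π)}, over the finitely many partitions π into distinct parts with r·⌈O⌉(π) + t·⌊O⌋(π) + s·⌊E⌋(π) = n, equals the coefficient of q^n in the product (−q^r; −ε q^{r+t+s})_∞. -/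
namespace SGSaux

lemma sumAlt_cons (f : ℕ → ℕ) (a : ℕ) (l : List ℕ) :
    sumAlt f (a :: l) = f a + sumAlt f l.tail := by
  cases l <;> simp [sumAlt]

lemma ceilO_cons (a : ℕ) (l : List ℕ) : ceilO (a :: l) = (a + 1) / 2 + ceilE l :=
  sumAlt_cons _ a l

lemma floorO_cons (a : ℕ) (l : List ℕ) : floorO (a :: l) = a / 2 + floorE l :=
  sumAlt_cons _ a l

lemma ceilE_cons (a : ℕ) (l : List ℕ) : ceilE (a :: l) = ceilO l := rfl

lemma floorE_cons (a : ℕ) (l : List ℕ) : floorE (a :: l) = floorO l := rfl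

/-- Main weight. -/
def Wmain (ε : ℤ) (l : List ℕ) : ℤ := (-1) ^ ceilE l * ε ^ floorE l

/-- Shifted weight (list starting at an even position). -/
def Waux (ε : ℤ) (l : List ℕ) : ℤ := (-1) ^ ceilO l * ε ^ floorO l

/-- Main exponent. -/
def Nmain (r t s : ℕ) (l : List ℕ) : ℕ := r * ceilO l + t * floorO l + s * floorE l

/-- Shifted exponent. -/
def Naux (r t s : ℕ) (l : List ℕ) : ℕ := r * ceilE l + t * floorE l + s * floorO l

lemma Wmain_cons (ε : ℤ) (a : ℕ) (l : List ℕ) : Wmain ε (a :: l) = Waux ε l := rfl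

lemma Waux_cons (ε : ℤ) (a : ℕ) (l : List ℕ) :
    Waux ε (a :: l) = ((-1) ^ ((a + 1) / 2) * ε ^ (a / 2)) * Wmain ε l := by
  unfold Waux Wmain
  rw [ceilO_cons, floorO_cons, pow_add, pow_add]
  ring

lemma Nmain_cons (r t s : ℕ) (a : ℕ) (l : List ℕ) :
    Nmain r t s (a :: l) = (r * ((a + 1) / 2) + t * (a / 2)) + Naux r t s l := by
  unfold Nmain Naux
  simp only [ceilO_cons, floorO_cons, ceilE_cons, floorE_cons]
  ring

lemma Naux_cons (r t s : ℕ) (a : ℕ) (l : List ℕ) :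
    Naux r t s (a :: l) = s * (a / 2) + Nmain r t s l := by
  unfold Nmain Naux
  simp only [ceilO_cons, floorO_cons, ceilE_cons, floorE_cons]
  ring

/-- Strictly decreasing lists of positive integers with all parts ≤ M. -/
def SD : ℕ → Finset (List ℕ)
  | 0 => {[]}
  | M + 1 => SD M ∪ (SD M).image (fun l => (M + 1) :: l)

lemma mem_SD {M : ℕ} {l : List ℕ} :
    l ∈ SD M ↔ l.Pairwise (· > ·) ∧ ∀ x ∈ l, 0 < x ∧ x ≤ M := by
  induction M generalizing l with
  | zero =>
    simp only [SD, Finset.mem_singleton]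
    constructor
    · rintro rfl; simp
    · rintro ⟨_, hb⟩
      cases l with
      | nil => rfl
      | cons a l => exact absurd (hb a (by simp)) (by omega)
  | succ M ih =>
    simp only [SD, Finset.mem_union, Finset.mem_image]
    constructor
    · rintro (h | ⟨l', hl', rfl⟩)
      · obtain ⟨hs, hb⟩ := ih.1 h
        exact ⟨hs, fun x hx => ⟨(hb x hx).1, by have := (hb x hx).2; omega⟩⟩
      · obtain ⟨hs, hb⟩ := ih.1 hl'
        refine ⟨List.pairwise_cons.2 ⟨fun b hb' => ?_, hs⟩, ?_⟩
        · have := (hb b hb').2; omega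
        · rintro x hx
          rcases List.mem_cons.1 hx with rfl | hx'
          · omega
          · exact ⟨(hb x hx').1, by have := (hb x hx').2; omega⟩
    · rintro ⟨hs, hb⟩
      cases l with
      | nil => exact Or.inl (ih.2 ⟨List.Pairwise.nil, by simp⟩)
      | cons a l' =>
        have hsc := List.pairwise_cons.1 hs
        by_cases ha : a = M + 1
        · subst ha
          refine Or.inr ⟨l', ih.2 ⟨hsc.2, fun x hx => ⟨(hb x (by simp [hx])).1, ?_⟩⟩, rfl⟩
          have := hsc.1 x hx; omega
        · refine Or.inl (ih.2 ⟨hs, fun x hx => ⟨(hb x hx).1, ?_⟩⟩)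
          rcases List.mem_cons.1 hx with rfl | hx'
          · have := (hb x (by simp)).2; omega
          · have h1 := hsc.1 x hx'
            have h2 := (hb a (by simp)).2
            omega

noncomputable def Aser (r t s : ℕ) (ε : ℤ) (M : ℕ) : PowerSeries ℤ :=
  ∑ l ∈ SD M, PowerSeries.C (Wmain ε l) * PowerSeries.X ^ Nmain r t s l

noncomputable def Bser (r t s : ℕ) (ε : ℤ) (M : ℕ) : PowerSeries ℤ :=
  ∑ l ∈ SD M, PowerSeries.C (Waux ε l) * PowerSeries.X ^ Naux r t s l

lemma Aser_zero (r t s : ℕ) (ε : ℤ) : Aser r t s ε 0 = 1 := by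
  rw [Aser]
  show ∑ l ∈ ({[]} : Finset (List ℕ)), _ = 1
  rw [Finset.sum_singleton]
  simp [Wmain, Nmain, ceilE, floorE, ceilO, floorO, sumAlt]

lemma Bser_zero (r t s : ℕ) (ε : ℤ) : Bser r t s ε 0 = 1 := by
  rw [Bser]
  show ∑ l ∈ ({[]} : Finset (List ℕ)), _ = 1
  rw [Finset.sum_singleton]
  simp [Waux, Naux, ceilE, floorE, ceilO, floorO, sumAlt]

lemma sum_SD_succ (M : ℕ) (f : List ℕ → PowerSeries ℤ) :
    ∑ l ∈ SD (M + 1), f l = (∑ l ∈ SD M, f l) + ∑ l ∈ SD M, f ((M + 1) :: l) := by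
  have hdisj : Disjoint (SD M) ((SD M).image (fun l => (M + 1) :: l)) := by
    rw [Finset.disjoint_left]
    rintro l hl hl'
    simp only [Finset.mem_image] at hl'
    obtain ⟨l', _, rfl⟩ := hl'
    have := (mem_SD.1 hl).2 (M + 1) (by simp)
    omega
  have hinj : ∀ x ∈ SD M, ∀ y ∈ SD M,
      (fun l => (M + 1) :: l) x = (fun l => (M + 1) :: l) y → x = y := by
    intro x _ y _ h; simpa using h
  rw [show SD (M + 1) = SD M ∪ (SD M).image (fun l => (M + 1) :: l) from rfl,
    Finset.sum_union hdisj, Finset.sum_image hinj]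

lemma Aser_succ (r t s : ℕ) (ε : ℤ) (M : ℕ) :
    Aser r t s ε (M + 1) = Aser r t s ε M
      + PowerSeries.X ^ (r * ((M + 2) / 2) + t * ((M + 1) / 2)) * Bser r t s ε M := by
  rw [Aser, sum_SD_succ, Bser, Finset.mul_sum]
  congr 1
  refine Finset.sum_congr rfl fun l _ => ?_
  rw [Wmain_cons, Nmain_cons]
  rw [show ((M:ℕ) + 1 + 1) / 2 = (M + 2) / 2 from rfl]
  rw [pow_add]
  ring

lemma Bser_succ (r t s : ℕ) (ε : ℤ) (M : ℕ) :
    Bser r t s ε (M + 1) = Bser r t s ε M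
      + PowerSeries.C ((-1) ^ ((M + 2) / 2) * ε ^ ((M + 1) / 2))
          * PowerSeries.X ^ (s * ((M + 1) / 2)) * Aser r t s ε M := by
  rw [Bser, sum_SD_succ, Aser, Finset.mul_sum]
  congr 1
  refine Finset.sum_congr rfl fun l _ => ?_
  rw [Waux_cons, Naux_cons]
  rw [show ((M:ℕ) + 1 + 1) / 2 = (M + 2) / 2 from rfl]
  rw [pow_add, map_mul]
  ring

lemma Bser_odd (r t s : ℕ) (ε : ℤ) (m : ℕ) : Bser r t s ε (2 * m + 1) = 0 := by
  induction m with
  | zero =>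
    rw [show 2 * 0 + 1 = 0 + 1 from rfl, Bser_succ, Bser_zero, Aser_zero]
    norm_num
  | succ m ih =>
    rw [show 2 * (m + 1) + 1 = (2 * m + 1 + 1) + 1 from by ring,
      Bser_succ r t s ε (2 * m + 1 + 1), Bser_succ r t s ε (2 * m + 1),
      Aser_succ r t s ε (2 * m + 1), ih]
    simp only [show ((2:ℕ) * m + 1 + 1 + 2) / 2 = m + 2 from by omega,
      show ((2:ℕ) * m + 1 + 1 + 1) / 2 = m + 1 from by omega,
      show ((2:ℕ) * m + 1 + 2) / 2 = m + 1 from by omega,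
      show ((2:ℕ) * m + 1 + 1) / 2 = m + 1 from by omega]
    rw [show ((-1 : ℤ)) ^ (m + 2) = -(-1 : ℤ) ^ (m + 1) from by rw [pow_succ]; ring]
    simp only [map_mul, map_neg, map_pow]
    ring

lemma Aser_odd (r t s : ℕ) (ε : ℤ) (m : ℕ) :
    Aser r t s ε (2 * m + 1) = ∏ i ∈ Finset.range (m + 1),
      (1 + PowerSeries.C ((-ε) ^ i) * PowerSeries.X ^ (r + (r + t + s) * i)) := by
  induction m with
  | zero =>
    rw [show 2 * 0 + 1 = 0 + 1 from rfl, Aser_succ, Aser_zero, Bser_zero,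
      Finset.prod_range_one]
    norm_num
  | succ m ih =>
    rw [show 2 * (m + 1) + 1 = (2 * m + 1 + 1) + 1 from by ring,
      Aser_succ r t s ε (2 * m + 1 + 1), Aser_succ r t s ε (2 * m + 1),
      Bser_succ r t s ε (2 * m + 1), Bser_odd r t s ε m, ih]
    conv_rhs => rw [Finset.prod_range_succ]
    simp only [show ((2:ℕ) * m + 1 + 1 + 2) / 2 = m + 2 from by omega,
      show ((2:ℕ) * m + 1 + 1 + 1) / 2 = m + 1 from by omega,
      show ((2:ℕ) * m + 1 + 2) / 2 = m + 1 from by omega,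
      show ((2:ℕ) * m + 1 + 1) / 2 = m + 1 from by omega]
    have hexp : r * (m + 2) + t * (m + 1) + s * (m + 1)
        = r + (r + t + s) * (m + 1) := by ring
    have hsgn : ((-ε : ℤ)) ^ (m + 1) = (-1 : ℤ) ^ (m + 1) * ε ^ (m + 1) := by
      rw [neg_pow]
    rw [hsgn, ← hexp]
    simp only [map_mul, map_pow, map_neg, map_one]
    ring

lemma head_bound (r t s : ℕ) (hrt : 0 < r + t) (n : ℕ) {l : List ℕ}
    (hl : l.Pairwise (· > ·)) (hn : Nmain r t s l = n) : ∀ x ∈ l, x ≤ 2 * n + 1 := by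
  cases l with
  | nil => simp
  | cons a l' =>
    have ha : a ≤ 2 * n + 1 := by
      have h1 : (a + 1) / 2 ≤ ceilO (a :: l') := by
        rw [ceilO_cons]; omega
      have h2 : a / 2 ≤ floorO (a :: l') := by
        rw [floorO_cons]; omega
      have h3 : r * ((a + 1) / 2) + t * (a / 2) ≤ n := by
        have := Nat.mul_le_mul_left r h1
        have := Nat.mul_le_mul_left t h2
        unfold Nmain at hn
        omega
      have h4 : (r + t) * (a / 2) ≤ r * ((a + 1) / 2) + t * (a / 2) := by
        have : a / 2 ≤ (a + 1) / 2 := Nat.div_le_div_right (Nat.le_succ a)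
        have := Nat.mul_le_mul_left r this
        nlinarith [Nat.add_mul r t (a / 2)]
      have h5 : a / 2 ≤ (r + t) * (a / 2) := Nat.le_mul_of_pos_left _ hrt
      omega
    intro x hx
    rcases List.mem_cons.1 hx with rfl | hx'
    · exact ha
    · have := (List.pairwise_cons.1 hl).1 x hx'
      omega

end SGSaux

/-- General Schmidt-type signed identity: for `r + t > 0` and `ε = ±1`,
`∑_{π ∈ D} (−1)^{⌈E⌉(π)} ε^{⌊E⌋(π)} q^{r⌈O⌉(π) + t⌊O⌋(π) + s⌊E⌋(π)}
  = ∏_{i≥0} (1 + (−ε)^i q^{r + (r+t+s)i})` in `ℤ⟦q⟧`: for every `n`, the signed count over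
partitions into distinct parts with `r⌈O⌉(π) + t⌊O⌋(π) + s⌊E⌋(π) = n` equals the coefficient
of `q^n` in the product (truncated at `i ≤ n`, which does not change this coefficient). -/
theorem signed_general_schmidt (r t s : ℕ) (hrt : 0 < r + t) (ε : ℤ)
    (hε : ε = 1 ∨ ε = -1) (n : ℕ) :
    (∑ᶠ l ∈ {l : List ℕ |
        IsDistinctPartition l ∧ r * ceilO l + t * floorO l + s * floorE l = n},
      ((-1 : ℤ)) ^ ceilE l * ε ^ floorE l)
    = PowerSeries.coeff n (∏ i ∈ Finset.range (n + 1),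
        (1 + PowerSeries.C ((-ε) ^ i) * PowerSeries.X ^ (r + (r + t + s) * i))) := by
  classical
  have hset : {l : List ℕ | IsDistinctPartition l ∧
        r * ceilO l + t * floorO l + s * floorE l = n}
      = ↑((SGSaux.SD (2 * n + 1)).filter fun l => SGSaux.Nmain r t s l = n) := by
    ext l
    simp only [Set.mem_setOf_eq, Finset.coe_filter, SGSaux.mem_SD, IsDistinctPartition]
    constructor
    · rintro ⟨⟨hs, hp⟩, hn⟩
      exact ⟨⟨hs, fun x hx => ⟨hp x hx, SGSaux.head_bound r t s hrt n hs hn x hx⟩⟩, hn⟩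
    · rintro ⟨⟨hs, hb⟩, hn⟩
      exact ⟨⟨hs, fun x hx => (hb x hx).1⟩, hn⟩
  rw [hset, finsum_mem_coe_finset, ← SGSaux.Aser_odd r t s ε n, SGSaux.Aser, map_sum,
    Finset.sum_filter]
  refine Finset.sum_congr rfl fun l _ => ?_
  rw [PowerSeries.coeff_C_mul, PowerSeries.coeff_X_pow]
  rcases eq_or_ne (SGSaux.Nmain r t s l) n with h | h
  · simp [h, SGSaux.Wmain]
  · simp [h, Ne.symm h]
end
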